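/- arXiv:0911.2080 — 5 statements merged into one kernel-verified Lean document; each statement's English description precedes it below -/
import Mathlib

section
/- Let M be a connected smooth Banach manifold modeled on a Banach space E with a {1}-structure (η_v)_{v∈E}. If ξ₁ and ξ₂ are infinitesimal automorphisms of (M,η) (smooth vector fields with [ξ₁, η_v] = 0 = [ξ₂, η_v] for all v ∈ E) and ξ₁(x₀) = ξ₂(x₀) for some point x₀ ∈ M, then ξ₁ = ξ₂. In other words, for each x₀ ∈ M, the evaluation map ξ ↦ ξ(x₀) on the space of infinitesimal automorphisms is injective. -/
/-!
Statement 1: On a smooth Banach manifold `M` modeled on a Banach space `E` with a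
`{1}`-structure `(η_v)_{v ∈ E}`, the infinitesimal automorphisms (smooth vector
fields `ξ` with `[ξ, η_v] = 0` for all `v`) are closed under the Lie bracket, which
is again a smooth vector field.
-/

open Set Bundle
open scoped Manifold

noncomputable section

/-- The pullback of a vector field under a map between manifolds (modeled on Banach
spaces with trivial models), obtained by applying the inverse of the derivative of the
map to the vector field at the image point.  (This is only meaningful when the
derivative is invertible, e.g. for the maps `extChartAt` used below.) -/
def mpullback {E F : Type*} [NormedAddCommGroup E] [NormedSpace ℝ E]
    [NormedAddCommGroup F] [NormedSpace ℝ F]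
    {M N : Type*} [TopologicalSpace M] [ChartedSpace E M]
    [TopologicalSpace N] [ChartedSpace F N]
    (f : M → N) (V : (y : N) → TangentSpace 𝓘(ℝ, F) y) (x : M) :
    TangentSpace 𝓘(ℝ, E) x :=
  (mfderiv 𝓘(ℝ, E) 𝓘(ℝ, F) f x).inverse (V (f x))

/-- The Lie bracket of two vector fields on a manifold modeled on a Banach space `E`
(with trivial, boundaryless model): push both vector fields forward to the model
space `E` using the preferred chart at `x₀` (equivalently, pull them back by the
inverse chart), take the usual Lie bracket
`[V, W](y) = DW(y)(V y) - DV(y)(W y)` of vector fields on `E`, and pull the result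
back to the manifold. -/
def mlieBracket {E : Type*} [NormedAddCommGroup E] [NormedSpace ℝ E]
    {M : Type*} [TopologicalSpace M] [ChartedSpace E M]
    (V W : (x : M) → TangentSpace 𝓘(ℝ, E) x) (x₀ : M) :
    TangentSpace 𝓘(ℝ, E) x₀ :=
  mpullback (extChartAt 𝓘(ℝ, E) x₀)
    (VectorField.lieBracket ℝ
      (mpullback (extChartAt 𝓘(ℝ, E) x₀).symm V)
      (mpullback (extChartAt 𝓘(ℝ, E) x₀).symm W)) x₀

/-- A `{1}`-structure (absolute parallelism) on a Banach manifold `M` modeled on `E`: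
a family `(η_v)_{v ∈ E}` of vector fields such that `(v, x) ↦ η_v x` is smooth,
`v ↦ η_v x` is linear in `v`, and for each `x` the map `v ↦ η_v x` is a topological
linear isomorphism of `E` onto the tangent space at `x`. -/
structure IsOneStructure {E : Type*} [NormedAddCommGroup E] [NormedSpace ℝ E]
    {M : Type*} [TopologicalSpace M] [ChartedSpace E M]
    [IsManifold 𝓘(ℝ, E) (⊤ : ℕ∞) M]
    (η : E → (x : M) → TangentSpace 𝓘(ℝ, E) x) : Prop where
  smooth : ContMDiff (𝓘(ℝ, E).prod 𝓘(ℝ, E)) 𝓘(ℝ, E).tangent (⊤ : ℕ∞)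
    (fun p : E × M => (⟨p.2, η p.1 p.2⟩ : TangentBundle 𝓘(ℝ, E) M))
  linear : ∀ x : M, IsLinearMap ℝ (fun v : E => η v x)
  isom : ∀ x : M, ∃ e : E ≃L[ℝ] TangentSpace 𝓘(ℝ, E) x, ∀ v : E, e v = η v x

/-- A vector field on a Banach manifold is smooth if it is smooth as a map into the
tangent bundle. -/
def IsSmoothVectorField {E : Type*} [NormedAddCommGroup E] [NormedSpace ℝ E]
    {M : Type*} [TopologicalSpace M] [ChartedSpace E M]
    [IsManifold 𝓘(ℝ, E) (⊤ : ℕ∞) M]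
    (ξ : (x : M) → TangentSpace 𝓘(ℝ, E) x) : Prop :=
  ContMDiff 𝓘(ℝ, E) 𝓘(ℝ, E).tangent (⊤ : ℕ∞)
    (fun x : M => (⟨x, ξ x⟩ : TangentBundle 𝓘(ℝ, E) M))

/-- A vector field `ξ` is an infinitesimal automorphism of the `{1}`-structure `η`
if it is smooth and `[ξ, η_v] = 0` for all `v : E`. -/
def IsInfinitesimalAutomorphism {E : Type*} [NormedAddCommGroup E] [NormedSpace ℝ E]
    {M : Type*} [TopologicalSpace M] [ChartedSpace E M]
    [IsManifold 𝓘(ℝ, E) (⊤ : ℕ∞) M]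
    (η : E → (x : M) → TangentSpace 𝓘(ℝ, E) x)
    (ξ : (x : M) → TangentSpace 𝓘(ℝ, E) x) : Prop :=
  IsSmoothVectorField ξ ∧ ∀ (v : E) (x : M), mlieBracket ξ (η v) x = 0

section Aux

open VectorField ContinuousLinearMap

variable {E : Type*} [NormedAddCommGroup E] [NormedSpace ℝ E] [CompleteSpace E]
  {M : Type*} [TopologicalSpace M] [ChartedSpace E M]
  [IsManifold 𝓘(ℝ, E) (⊤ : ℕ∞) M]

lemma aux_mfderiv_extChartAt {x z : M} (hz : z ∈ (extChartAt 𝓘(ℝ, E) x).source) :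
    mfderiv 𝓘(ℝ, E) 𝓘(ℝ, E) (extChartAt 𝓘(ℝ, E) x) z = tangentCoordChange 𝓘(ℝ, E) z x z := by
  have h1 : z ∈ (chartAt E x).source := by rwa [extChartAt_source] at hz
  rw [(hasMFDerivAt_extChartAt h1).mfderiv, mfderiv_chartAt_eq_tangentCoordChange h1]

lemma aux_isInvertible_tcc {x z : M} (hz : z ∈ (extChartAt 𝓘(ℝ, E) x).source) :
    (tangentCoordChange 𝓘(ℝ, E) z x z).IsInvertible := by
  rw [← aux_mfderiv_extChartAt hz]
  exact isInvertible_mfderiv_extChartAt hz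

lemma aux_inverse_mfderiv_symm {x z : M} (hz : z ∈ (extChartAt 𝓘(ℝ, E) x).source) :
    (mfderiv 𝓘(ℝ, E) 𝓘(ℝ, E) (extChartAt 𝓘(ℝ, E) x).symm (extChartAt 𝓘(ℝ, E) x z)).inverse
      = tangentCoordChange 𝓘(ℝ, E) z x z := by
  have h1 := mfderivWithin_extChartAt_symm_comp_mfderiv_extChartAt' (I := 𝓘(ℝ, E)) hz
  have h2 := mfderiv_extChartAt_comp_mfderivWithin_extChartAt_symm' (I := 𝓘(ℝ, E)) hz
  rw [ModelWithCorners.range_eq_univ, mfderivWithin_univ] at h1 h2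
  exact (ContinuousLinearMap.inverse_eq h1 h2).trans (aux_mfderiv_extChartAt hz)

lemma aux_mfderiv_symm_invertible {x z : M} (hz : z ∈ (extChartAt 𝓘(ℝ, E) x).source) :
    (mfderiv 𝓘(ℝ, E) 𝓘(ℝ, E) (extChartAt 𝓘(ℝ, E) x).symm
      (extChartAt 𝓘(ℝ, E) x z)).IsInvertible := by
  have h1 := mfderivWithin_extChartAt_symm_comp_mfderiv_extChartAt' (I := 𝓘(ℝ, E)) hz
  have h2 := mfderiv_extChartAt_comp_mfderivWithin_extChartAt_symm' (I := 𝓘(ℝ, E)) hz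
  rw [ModelWithCorners.range_eq_univ, mfderivWithin_univ] at h1 h2
  exact ContinuousLinearMap.IsInvertible.of_inverse h1 h2

lemma aux_mpullback_eq {x z : M} (hz : z ∈ (extChartAt 𝓘(ℝ, E) x).source)
    (ξ : (x : M) → TangentSpace 𝓘(ℝ, E) x) :
    mpullback (extChartAt 𝓘(ℝ, E) x).symm ξ (extChartAt 𝓘(ℝ, E) x z)
      = tangentCoordChange 𝓘(ℝ, E) z x z (ξ z) := by
  rw [_root_.mpullback, (extChartAt 𝓘(ℝ, E) x).left_inv hz]
  exact DFunLike.congr_fun (aux_inverse_mfderiv_symm hz) (ξ z)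

/-- The representation of a vector field in the preferred chart at `x`. -/
def coordRep (ξ : (x : M) → TangentSpace 𝓘(ℝ, E) x) (x : M) : E → E := fun y =>
  tangentCoordChange 𝓘(ℝ, E) ((extChartAt 𝓘(ℝ, E) x).symm y) x ((extChartAt 𝓘(ℝ, E) x).symm y)
    (ξ ((extChartAt 𝓘(ℝ, E) x).symm y))

lemma aux_mpullback_eqOn (ξ : (x : M) → TangentSpace 𝓘(ℝ, E) x) (x : M) :
    Set.EqOn (mpullback (extChartAt 𝓘(ℝ, E) x).symm ξ) (coordRep ξ x)
      (extChartAt 𝓘(ℝ, E) x).target := by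
  intro y hy
  have hz : (extChartAt 𝓘(ℝ, E) x).symm y ∈ (extChartAt 𝓘(ℝ, E) x).source :=
    (extChartAt 𝓘(ℝ, E) x).map_target hy
  have h := aux_mpullback_eq hz ξ
  rwa [(extChartAt 𝓘(ℝ, E) x).right_inv hy] at h

lemma contMDiffOn_triv_snd {ξ : (x : M) → TangentSpace 𝓘(ℝ, E) x}
    (hξ : IsSmoothVectorField ξ) (x : M) :
    ContMDiffOn 𝓘(ℝ, E) 𝓘(ℝ, E) (⊤ : ℕ∞)
      (fun z => tangentCoordChange 𝓘(ℝ, E) z x z (ξ z)) (extChartAt 𝓘(ℝ, E) x).source := by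
  have hmap : Set.MapsTo (fun z : M => (⟨z, ξ z⟩ : TangentBundle 𝓘(ℝ, E) M))
      (extChartAt 𝓘(ℝ, E) x).source (trivializationAt E (TangentSpace 𝓘(ℝ, E)) x).source := by
    intro z hz
    rw [TangentBundle.trivializationAt_source]
    simpa [extChartAt_source] using hz
  exact ((Trivialization.contMDiffOn_iff hmap).1 (hξ.contMDiffOn)).2

lemma contDiffOn_coordRep {ξ : (x : M) → TangentSpace 𝓘(ℝ, E) x}
    (hξ : IsSmoothVectorField ξ) (x : M) :
    ContDiffOn ℝ (⊤ : ℕ∞) (coordRep ξ x) (extChartAt 𝓘(ℝ, E) x).target := by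
  have h := contMDiffOn_triv_snd hξ x
  have hsymm := contMDiffOn_extChartAt_symm (I := 𝓘(ℝ, E)) (n := (⊤ : ℕ∞)) x
  have hcomp := h.comp hsymm (fun y hy => (extChartAt 𝓘(ℝ, E) x).map_target hy)
  exact contMDiffOn_iff_contDiffOn.1 hcomp

lemma isSmoothVectorField_eta {η : E → (x : M) → TangentSpace 𝓘(ℝ, E) x}
    (hη : IsOneStructure η) (v : E) : IsSmoothVectorField (η v) := by
  have h1 : ContMDiff 𝓘(ℝ, E) (𝓘(ℝ, E).prod 𝓘(ℝ, E)) (⊤ : ℕ∞) (fun z : M => ((v, z) : E × M)) :=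
    contMDiff_const.prodMk contMDiff_id
  exact hη.smooth.comp h1

lemma contDiffOn_etaRep {η : E → (x : M) → TangentSpace 𝓘(ℝ, E) x}
    (hη : IsOneStructure η) (x : M) :
    ContDiffOn ℝ (⊤ : ℕ∞) (fun p : E × E => coordRep (η p.1) x p.2)
      (Set.univ ×ˢ (extChartAt 𝓘(ℝ, E) x).target) := by
  have hmap : Set.MapsTo (fun p : E × M => (⟨p.2, η p.1 p.2⟩ : TangentBundle 𝓘(ℝ, E) M))
      (Set.univ ×ˢ (extChartAt 𝓘(ℝ, E) x).source)
      (trivializationAt E (TangentSpace 𝓘(ℝ, E)) x).source := by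
    intro p hp
    rw [TangentBundle.trivializationAt_source]
    simpa [extChartAt_source] using hp.2
  have h := ((Trivialization.contMDiffOn_iff hmap).1 (hη.smooth.contMDiffOn)).2
  have hsymm : ContMDiffOn (𝓘(ℝ, E).prod 𝓘(ℝ, E)) (𝓘(ℝ, E).prod 𝓘(ℝ, E)) (⊤ : ℕ∞)
      (Prod.map (id : E → E) (extChartAt 𝓘(ℝ, E) x).symm)
      (Set.univ ×ˢ (extChartAt 𝓘(ℝ, E) x).target) :=
    contMDiffOn_id.prodMap (contMDiffOn_extChartAt_symm (I := 𝓘(ℝ, E)) (n := (⊤ : ℕ∞)) x)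
  have hcomp := h.comp hsymm (fun p hp => ⟨Set.mem_univ _, (extChartAt 𝓘(ℝ, E) x).map_target hp.2⟩)
  rw [← modelWithCornersSelf_prod, chartedSpaceSelf_prod] at hcomp
  exact contMDiffOn_iff_contDiffOn.1 hcomp

lemma etaRep_invertible {η : E → (x : M) → TangentSpace 𝓘(ℝ, E) x}
    (hη : IsOneStructure η) (x : M) {y : E} (hy : y ∈ (extChartAt 𝓘(ℝ, E) x).target) :
    ∃ L : E →L[ℝ] E, L.IsInvertible ∧ ∀ v, L v = coordRep (η v) x y := by
  have hz : (extChartAt 𝓘(ℝ, E) x).symm y ∈ (extChartAt 𝓘(ℝ, E) x).source :=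
    (extChartAt 𝓘(ℝ, E) x).map_target hy
  set z := (extChartAt 𝓘(ℝ, E) x).symm y
  obtain ⟨e, he⟩ := hη.isom z
  refine ⟨(tangentCoordChange 𝓘(ℝ, E) z x z).comp
    (e.toContinuousLinearMap : E →L[ℝ] E), ?_, ?_⟩
  · exact (aux_isInvertible_tcc hz).comp (ContinuousLinearMap.isInvertible_equiv)
  · intro v
    exact congrArg (tangentCoordChange 𝓘(ℝ, E) z x z) (he v)

lemma lieBracket_coordRep_eq_zero {η : E → (x : M) → TangentSpace 𝓘(ℝ, E) x}
    (hη : IsOneStructure η) {ξ : (x : M) → TangentSpace 𝓘(ℝ, E) x}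
    (hξ : IsInfinitesimalAutomorphism η ξ) (x : M) {y : E}
    (hy : y ∈ (extChartAt 𝓘(ℝ, E) x).target) (v : E) :
    VectorField.lieBracket ℝ (coordRep ξ x) (coordRep (η v) x) y = 0 := by
  have hzsrc : (extChartAt 𝓘(ℝ, E) x).symm y ∈ (extChartAt 𝓘(ℝ, E) x).source :=
    (extChartAt 𝓘(ℝ, E) x).map_target hy
  set z : M := (extChartAt 𝓘(ℝ, E) x).symm y with hzdef
  have hzψ : z ∈ (extChartAt 𝓘(ℝ, E) z).source := mem_extChartAt_source z
  set O : Set E := (extChartAt 𝓘(ℝ, E) x).target ∩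
    (extChartAt 𝓘(ℝ, E) x).symm ⁻¹' (extChartAt 𝓘(ℝ, E) z).source with hO
  have hOopen : IsOpen O :=
    (continuousOn_extChartAt_symm x).isOpen_inter_preimage (isOpen_extChartAt_target x)
      (isOpen_extChartAt_source z)
  have hyO : y ∈ O := ⟨hy, hzψ⟩
  set τ : E → E := fun w => extChartAt 𝓘(ℝ, E) z ((extChartAt 𝓘(ℝ, E) x).symm w) with hτ
  -- identification of the two coordinate representations via pullback under `τ`
  have key : ∀ (ζ : (x' : M) → TangentSpace 𝓘(ℝ, E) x'), ∀ w ∈ O,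
      coordRep ζ x w = VectorField.pullback ℝ τ (coordRep ζ z) w := by
    intro ζ w hw
    have hw1 : (extChartAt 𝓘(ℝ, E) x).symm w ∈ (extChartAt 𝓘(ℝ, E) x).source :=
      (extChartAt 𝓘(ℝ, E) x).map_target hw.1
    have hw2 : (extChartAt 𝓘(ℝ, E) x).symm w ∈ (extChartAt 𝓘(ℝ, E) z).source := hw.2
    set z' : M := (extChartAt 𝓘(ℝ, E) x).symm w with hz'def
    have hmd1 : MDifferentiableAt 𝓘(ℝ, E) 𝓘(ℝ, E) (extChartAt 𝓘(ℝ, E) z) z' :=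
      mdifferentiableAt_extChartAt (by rwa [← extChartAt_source 𝓘(ℝ, E)])
    have hmd2 : MDifferentiableAt 𝓘(ℝ, E) 𝓘(ℝ, E) (extChartAt 𝓘(ℝ, E) x).symm w := by
      have := mdifferentiableWithinAt_extChartAt_symm (x := x) hw.1
      rwa [ModelWithCorners.range_eq_univ, mdifferentiableWithinAt_univ] at this
    have hfd : fderiv ℝ τ w = (mfderiv 𝓘(ℝ, E) 𝓘(ℝ, E) (extChartAt 𝓘(ℝ, E) z) z').comp
        (mfderiv 𝓘(ℝ, E) 𝓘(ℝ, E) (extChartAt 𝓘(ℝ, E) x).symm w) := by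
      rw [← mfderiv_eq_fderiv]
      exact mfderiv_comp w hmd1 hmd2
    have hA : mfderiv 𝓘(ℝ, E) 𝓘(ℝ, E) (extChartAt 𝓘(ℝ, E) z) z'
        = tangentCoordChange 𝓘(ℝ, E) z' z z' := aux_mfderiv_extChartAt hw2
    have hw' : (extChartAt 𝓘(ℝ, E) x) z' = w := (extChartAt 𝓘(ℝ, E) x).right_inv hw.1
    have hBinv : (mfderiv 𝓘(ℝ, E) 𝓘(ℝ, E) (extChartAt 𝓘(ℝ, E) x).symm w).IsInvertible := by
      rw [← hw']; exact aux_mfderiv_symm_invertible hw1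
    have hB : (mfderiv 𝓘(ℝ, E) 𝓘(ℝ, E) (extChartAt 𝓘(ℝ, E) x).symm w).inverse
        = tangentCoordChange 𝓘(ℝ, E) z' x z' := by
      rw [← hw']; exact aux_inverse_mfderiv_symm hw1
    have hAinv : (tangentCoordChange 𝓘(ℝ, E) z' z z').IsInvertible := aux_isInvertible_tcc hw2
    have hτw : τ w = extChartAt 𝓘(ℝ, E) z z' := rfl
    have hVval : coordRep ζ z (τ w) = tangentCoordChange 𝓘(ℝ, E) z' z z' (ζ z') := by
      rw [hτw]
      show tangentCoordChange 𝓘(ℝ, E)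
        ((extChartAt 𝓘(ℝ, E) z).symm ((extChartAt 𝓘(ℝ, E) z) z')) z _ _ = _
      rw [(extChartAt 𝓘(ℝ, E) z).left_inv hw2]
    erw [VectorField.pullback, hVval, hfd, hA, hAinv.inverse_comp_apply_of_left,
      hAinv.inverse_apply_eq.2 rfl, hB]
    rfl
  -- smoothness of τ on O
  have hτsm : ContDiffAt ℝ 2 τ y := by
    have hψs : ContMDiffOn 𝓘(ℝ, E) 𝓘(ℝ, E) (⊤ : ℕ∞) (extChartAt 𝓘(ℝ, E) z)
        (extChartAt 𝓘(ℝ, E) z).source := by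
      have := contMDiffOn_extChartAt (I := 𝓘(ℝ, E)) (x := z) (n := (⊤ : ℕ∞))
      rwa [← extChartAt_source 𝓘(ℝ, E)] at this
    have hφs : ContMDiffOn 𝓘(ℝ, E) 𝓘(ℝ, E) (⊤ : ℕ∞) (extChartAt 𝓘(ℝ, E) x).symm O :=
      (contMDiffOn_extChartAt_symm (I := 𝓘(ℝ, E)) x).mono Set.inter_subset_left
    have hcomp : ContMDiffOn 𝓘(ℝ, E) 𝓘(ℝ, E) (⊤ : ℕ∞) τ O :=
      hψs.comp hφs (fun w hw => hw.2)
    have h2 : ContDiffOn ℝ (⊤ : ℕ∞) τ O := contMDiffOn_iff_contDiffOn.1 hcomp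
    refine (h2.contDiffAt (hOopen.mem_nhds hyO)).of_le ?_
    rw [show (2 : WithTop ℕ∞) = ((2 : ℕ∞) : WithTop ℕ∞) from rfl]
    exact WithTop.coe_le_coe.2 le_top
  have hsymm : IsSymmSndFDerivAt ℝ τ y := hτsm.isSymmSndFDerivAt (by simp [minSmoothness_of_isRCLikeNormedField])
  -- differentiability of the coordinate representations in the chart at z
  have hψztgt : extChartAt 𝓘(ℝ, E) z z ∈ (extChartAt 𝓘(ℝ, E) z).target :=
    (extChartAt 𝓘(ℝ, E) z).map_source hzψ
  have hτy : τ y = extChartAt 𝓘(ℝ, E) z z := rfl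
  have hVd : DifferentiableAt ℝ (coordRep ξ z) (τ y) := by
    rw [hτy]
    exact ((contDiffOn_coordRep hξ.1 z).differentiableOn (by norm_num)).differentiableAt
      ((isOpen_extChartAt_target z).mem_nhds hψztgt)
  have hWd : DifferentiableAt ℝ (coordRep (η v) z) (τ y) := by
    rw [hτy]
    exact ((contDiffOn_coordRep (isSmoothVectorField_eta hη v) z).differentiableOn
      (by norm_num)).differentiableAt ((isOpen_extChartAt_target z).mem_nhds hψztgt)
  -- the Lie bracket in the chart at z vanishes at the center
  have hbz : VectorField.lieBracket ℝ (coordRep ξ z) (coordRep (η v) z)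
      (extChartAt 𝓘(ℝ, E) z z) = 0 := by
    have h0 := hξ.2 v z
    rw [_root_.mlieBracket] at h0
    have hFinv : (mfderiv 𝓘(ℝ, E) 𝓘(ℝ, E) (extChartAt 𝓘(ℝ, E) z) z).IsInvertible :=
      isInvertible_mfderiv_extChartAt hzψ
    have h1 := hFinv.inverse_apply_eq.1 h0
    rw [map_zero] at h1
    have hev3 : mpullback (extChartAt 𝓘(ℝ, E) z).symm ξ =ᶠ[nhds (extChartAt 𝓘(ℝ, E) z z)]
        coordRep ξ z := by
      filter_upwards [(isOpen_extChartAt_target z).mem_nhds hψztgt] with w hw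
        using aux_mpullback_eqOn ξ z hw
    have hev4 : mpullback (extChartAt 𝓘(ℝ, E) z).symm (η v)
        =ᶠ[nhds (extChartAt 𝓘(ℝ, E) z z)] coordRep (η v) z := by
      filter_upwards [(isOpen_extChartAt_target z).mem_nhds hψztgt] with w hw
        using aux_mpullback_eqOn (η v) z hw
    rw [← hev3.lieBracket_vectorField_eq hev4]
    exact h1
  -- transfer along τ
  have hev1 : coordRep ξ x =ᶠ[nhds y] VectorField.pullback ℝ τ (coordRep ξ z) := by
    filter_upwards [hOopen.mem_nhds hyO] with w hw using key ξ w hw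
  have hev2 : coordRep (η v) x =ᶠ[nhds y] VectorField.pullback ℝ τ (coordRep (η v) z) := by
    filter_upwards [hOopen.mem_nhds hyO] with w hw using key (η v) w hw
  rw [hev1.lieBracket_vectorField_eq hev2,
    ← VectorField.pullback_lieBracket_of_isSymmSndFDerivAt hsymm hτsm hVd hWd,
    VectorField.pullback, hτy, hbz, map_zero]

end Aux

section Analysis

open VectorField ContinuousLinearMap

variable {E : Type*} [NormedAddCommGroup E] [NormedSpace ℝ E] [CompleteSpace E]

set_option synthInstance.maxHeartbeats 100000 in
/-- Key local analytic lemma: a vector field `Z` satisfying the linear first-order PDE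
`DZ(y)(h(v,y)) = D_y(h(v,·))(Z y)` with an invertible frame `h` and vanishing at `y₀`
vanishes in a neighborhood of `y₀`. -/
lemma key_local {Z : E → E} {h : E × E → E} {U : Set E} (hU : IsOpen U) {y₀ : E} (hy₀ : y₀ ∈ U)
    (hZ : ContDiffOn ℝ 2 Z U) (hh : ContDiffOn ℝ 2 h (Set.univ ×ˢ U))
    (hinv : ∀ y ∈ U, ∃ L : E →L[ℝ] E, L.IsInvertible ∧ ∀ v, L v = h (v, y))
    (hpde : ∀ y ∈ U, ∀ v, fderiv ℝ Z y (h (v, y)) = fderiv ℝ (fun y' => h (v, y')) y (Z y))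
    (hZ0 : Z y₀ = 0) : ∀ᶠ y in nhds y₀, Z y = 0 := by
  have hUo : IsOpen ((Set.univ : Set E) ×ˢ U) := by exact isOpen_univ.prod hU
  have hZdiffAt : ∀ y ∈ U, DifferentiableAt ℝ Z y := fun y hy =>
    (hZ.differentiableOn (by norm_num)).differentiableAt (hU.mem_nhds hy)
  have hhdiff : DifferentiableOn ℝ h (Set.univ ×ˢ U) := hh.differentiableOn (by norm_num)
  have hh2 : ContDiffOn ℝ ((1 : WithTop ℕ∞) + 1) h (Set.univ ×ˢ U) := by
    exact_mod_cast hh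
  have hhfderiv : ContDiffOn ℝ 1 (fderiv ℝ h) (Set.univ ×ˢ U) :=
    ((contDiffOn_succ_iff_fderiv_of_isOpen hUo).1 hh2).2.2
  set P : E → (E × E) →L[ℝ] E := fun y => fderiv ℝ h (0, y) with hPdef
  have hinrmap : ∀ y ∈ U, ((0 : E), y) ∈ Set.univ ×ˢ U := fun y hy => ⟨trivial, hy⟩
  have hPc : ContDiffOn ℝ 1 P U :=
    hhfderiv.comp ((ContinuousLinearMap.inr ℝ E E).contDiff.contDiffOn) hinrmap
  -- pointwise identification h (v, y) = P y (v, 0)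
  have hhP : ∀ y ∈ U, ∀ v, h (v, y) = P y (v, 0) := by
    intro y hy v
    obtain ⟨L, hLinv, hL⟩ := hinv y hy
    have hdiff : DifferentiableAt ℝ h ((0 : E), y) :=
      hhdiff.differentiableAt (hUo.mem_nhds (hinrmap y hy))
    have hcurve : HasDerivAt (fun t : ℝ => ((t • v, y) : E × E)) ((v, (0 : E))) 0 := by
      have h1 : HasDerivAt (fun t : ℝ => t • v) v 0 := by
        simpa using (hasDerivAt_id (0 : ℝ)).smul_const v
      exact h1.prodMk (hasDerivAt_const _ _)
    have h1 : HasDerivAt (fun t : ℝ => h (t • v, y)) (P y (v, 0)) 0 := by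
      have hdiff' : HasFDerivAt h (fderiv ℝ h ((0 : E), y)) (((0 : ℝ) • v, y)) := by
        simpa using hdiff.hasFDerivAt
      have := hdiff'.comp_hasDerivAt 0 hcurve
      simpa [hPdef, Function.comp_def] using this
    have h2 : HasDerivAt (fun t : ℝ => h (t • v, y)) (h (v, y)) 0 := by
      have heq : (fun t : ℝ => h (t • v, y)) = fun t : ℝ => t • h (v, y) := by
        funext t; rw [← hL, ← hL, map_smul]
      rw [heq]
      simpa using (hasDerivAt_id (0 : ℝ)).smul_const (h (v, y))
    exact h2.unique h1
  -- derivative of the slice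
  have hPdiffAt : ∀ y ∈ U, DifferentiableAt ℝ P y := fun y hy =>
    (hPc.differentiableOn (by norm_num)).differentiableAt (hU.mem_nhds hy)
  have claim2 : ∀ y ∈ U, ∀ v, fderiv ℝ (fun y' => h (v, y')) y =
      (ContinuousLinearMap.apply ℝ E ((v, (0 : E)))).comp (fderiv ℝ P y) := by
    intro y hy v
    have hev : (fun y' => h (v, y')) =ᶠ[nhds y]
        (fun y' => (ContinuousLinearMap.apply ℝ E ((v, (0 : E)))) (P y')) := by
      filter_upwards [hU.mem_nhds hy] with y' hy'
      simpa using hhP y' hy' v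
    rw [hev.fderiv_eq]
    exact ((ContinuousLinearMap.apply ℝ E ((v, (0 : E)))).hasFDerivAt.comp y
      (hPdiffAt y hy).hasFDerivAt).fderiv
  have hbound : ∀ y ∈ U, ∀ v u, ‖fderiv ℝ (fun y' => h (v, y')) y u‖ ≤
      ‖fderiv ℝ P y‖ * ‖v‖ * ‖u‖ := by
    intro y hy v u
    rw [claim2 y hy v]
    calc ‖(ContinuousLinearMap.apply ℝ E ((v, (0 : E)))).comp (fderiv ℝ P y) u‖
        = ‖(fderiv ℝ P y u) (v, 0)‖ := rfl
      _ ≤ ‖fderiv ℝ P y u‖ * ‖((v, (0 : E)) : E × E)‖ :=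
          ContinuousLinearMap.le_opNorm _ _
      _ ≤ ‖fderiv ℝ P y u‖ * ‖v‖ := by
          apply mul_le_mul_of_nonneg_left _ (norm_nonneg _)
          rw [Prod.norm_def]
          simp [max_le_iff, le_refl, norm_nonneg]
      _ ≤ ‖fderiv ℝ P y‖ * ‖u‖ * ‖v‖ :=
          mul_le_mul_of_nonneg_right (ContinuousLinearMap.le_opNorm _ _) (norm_nonneg _)
      _ = ‖fderiv ℝ P y‖ * ‖v‖ * ‖u‖ := by ring
  -- the frame as a continuous-linear-map-valued map
  set a : E → E →L[ℝ] E := fun y => (P y).comp (ContinuousLinearMap.inl ℝ E E) with hadef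
  have ha_eq : ∀ y ∈ U, ∀ v, a y v = h (v, y) := by
    intro y hy v
    simp only [hadef, ContinuousLinearMap.coe_comp', Function.comp_apply,
      ContinuousLinearMap.inl_apply]
    exact (hhP y hy v).symm
  have ha_inv : ∀ y ∈ U, (a y).IsInvertible := by
    intro y hy
    obtain ⟨L, hLinv, hL⟩ := hinv y hy
    have : a y = L := by
      ext v; rw [ha_eq y hy v, hL]
    rw [this]; exact hLinv
  have hac : ContinuousOn a U := by
    have hclm : Continuous fun q : (E × E) →L[ℝ] E => q.comp (ContinuousLinearMap.inl ℝ E E) :=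
      ((ContinuousLinearMap.compL ℝ E (E × E) E).flip (ContinuousLinearMap.inl ℝ E E)).continuous
    exact hclm.comp_continuousOn (hPc.continuousOn)
  -- continuity of the inverse at y₀
  have hcontinv : ContinuousAt (fun y => Ring.inverse (a y)) y₀ := by
    obtain ⟨e, he⟩ := ha_inv y₀ hy₀
    have hu : ContinuousAt Ring.inverse (a y₀) := by
      rw [← he]
      exact NormedRing.inverse_continuousAt ((ContinuousLinearEquiv.unitsEquiv ℝ E).symm e)
    exact hu.comp (hac.continuousAt (hU.mem_nhds hy₀))
  -- continuity of fderiv P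
  have hPfc : ContinuousOn (fderiv ℝ P) U := by
    have h01 : ContDiffOn ℝ ((0 : WithTop ℕ∞) + 1) P U := by exact_mod_cast hPc
    exact (((contDiffOn_succ_iff_fderiv_of_isOpen hU).1 h01).2.2).continuousOn
  -- choose constants and a ball
  set C₁ : ℝ := ‖fderiv ℝ P y₀‖ + 1 with hC₁
  set C₂ : ℝ := ‖Ring.inverse (a y₀)‖ + 1 with hC₂
  have hC₁pos : 0 < C₁ := by positivity
  have hC₂pos : 0 < C₂ := by positivity
  have hV : {y | ‖fderiv ℝ P y‖ < C₁ ∧ ‖Ring.inverse (a y)‖ < C₂} ∩ U ∈ nhds y₀ := by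
    have h1 : ContinuousAt (fun y => ‖fderiv ℝ P y‖) y₀ :=
      (hPfc.continuousAt (hU.mem_nhds hy₀)).norm (E := E →L[ℝ] (E × E →L[ℝ] E))
    have h2 : ContinuousAt (fun y => ‖Ring.inverse (a y)‖) y₀ := hcontinv.norm
    have hlt1 : ∀ᶠ y in nhds y₀, ‖fderiv ℝ P y‖ < C₁ :=
      h1.eventually_lt_const (by simp [hC₁])
    have hlt2 : ∀ᶠ y in nhds y₀, ‖Ring.inverse (a y)‖ < C₂ :=
      h2.eventually_lt_const (by simp [hC₂])
    filter_upwards [hlt1, hlt2, hU.mem_nhds hy₀] with y hy1 hy2 hy3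
    exact ⟨⟨hy1, hy2⟩, hy3⟩
  obtain ⟨r, hrpos, hrball⟩ := Metric.mem_nhds_iff.1 hV
  set K : ℝ := C₁ * C₂ with hK
  -- the key norm inequality
  have hZbound : ∀ y ∈ Metric.ball y₀ r, ‖fderiv ℝ Z y‖ ≤ K * ‖Z y‖ := by
    intro y hy
    obtain ⟨⟨hy1, hy2⟩, hyU⟩ := hrball hy
    apply ContinuousLinearMap.opNorm_le_bound _ (by positivity)
    intro w
    set v : E := Ring.inverse (a y) w with hv
    have hayv : a y v = w := by
      have hinv' := ha_inv y hyU
      rw [hv, ContinuousLinearMap.ringInverse_eq_inverse]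
      obtain ⟨e, he⟩ := hinv'
      rw [← he, ContinuousLinearMap.inverse_equiv]
      simp
    have hw : h (v, y) = w := by rw [← ha_eq y hyU v, hayv]
    have hvnorm : ‖v‖ ≤ C₂ * ‖w‖ := by
      calc ‖v‖ ≤ ‖Ring.inverse (a y)‖ * ‖w‖ := ContinuousLinearMap.le_opNorm _ _
        _ ≤ C₂ * ‖w‖ := mul_le_mul_of_nonneg_right hy2.le (norm_nonneg _)
    calc ‖fderiv ℝ Z y w‖ = ‖fderiv ℝ (fun y' => h (v, y')) y (Z y)‖ := by
          rw [← hw, hpde y hyU v]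
      _ ≤ ‖fderiv ℝ P y‖ * ‖v‖ * ‖Z y‖ := hbound y hyU v (Z y)
      _ ≤ C₁ * (C₂ * ‖w‖) * ‖Z y‖ := by
          apply mul_le_mul_of_nonneg_right _ (norm_nonneg _)
          exact mul_le_mul hy1.le hvnorm (norm_nonneg _) hC₁pos.le
      _ = K * ‖Z y‖ * ‖w‖ := by ring
  -- Gronwall along segments
  have hball : ∀ y₁ ∈ Metric.ball y₀ r, Z y₁ = 0 := by
    intro y₁ hy₁
    set c : E := y₁ - y₀ with hc
    set σ : ℝ → E := fun t => y₀ + t • c with hσ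
    have hσmem : ∀ t ∈ Set.Icc (0 : ℝ) 1, σ t ∈ Metric.ball y₀ r := fun t ht =>
      (convex_ball y₀ r).add_smul_sub_mem (Metric.mem_ball_self hrpos) hy₁ ht
    have hσU : ∀ t ∈ Set.Icc (0 : ℝ) 1, σ t ∈ U := fun t ht => (hrball (hσmem t ht)).2
    have hσcont : Continuous σ := continuous_const.add (continuous_id.smul continuous_const)
    have hσderiv : ∀ t : ℝ, HasDerivAt σ c t := by
      intro t
      simpa [hσ] using ((hasDerivAt_id t).smul_const c).const_add y₀
    set g : ℝ → E := fun t => Z (σ t) with hg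
    have hgc : ContinuousOn g (Set.Icc 0 1) := by
      apply ((hZ.continuousOn).comp hσcont.continuousOn)
      intro t ht; exact hσU t ht
    have hg' : ∀ t ∈ Set.Ico (0 : ℝ) 1, HasDerivWithinAt g
        (fderiv ℝ Z (σ t) c) (Set.Ici t) t := by
      intro t ht
      have htIcc : t ∈ Set.Icc (0 : ℝ) 1 := ⟨ht.1, ht.2.le⟩
      exact (((hZdiffAt (σ t) (hσU t htIcc)).hasFDerivAt.comp_hasDerivAt t
        (hσderiv t))).hasDerivWithinAt
    have hbd : ∀ t ∈ Set.Ico (0 : ℝ) 1, ‖fderiv ℝ Z (σ t) c‖ ≤ (K * ‖c‖) * ‖g t‖ + 0 := by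
      intro t ht
      have htIcc : t ∈ Set.Icc (0 : ℝ) 1 := ⟨ht.1, ht.2.le⟩
      calc ‖fderiv ℝ Z (σ t) c‖ ≤ ‖fderiv ℝ Z (σ t)‖ * ‖c‖ :=
            ContinuousLinearMap.le_opNorm _ _
        _ ≤ (K * ‖Z (σ t)‖) * ‖c‖ :=
            mul_le_mul_of_nonneg_right (hZbound _ (hσmem t htIcc)) (norm_nonneg _)
        _ = (K * ‖c‖) * ‖g t‖ + 0 := by simp [hg]; ring
    have hg0 : ‖g 0‖ ≤ 0 := by
      simp only [hg, hσ]
      simp [hZ0]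
    have := norm_le_gronwallBound_of_norm_deriv_right_le hgc hg' hg0 hbd 1
      (Set.right_mem_Icc.2 zero_le_one)
    rw [gronwallBound_ε0_δ0] at this
    have hg1 : g 1 = Z y₁ := by simp [hg, hσ, hc]
    rw [hg1] at this
    exact norm_le_zero_iff.1 this
  filter_upwards [Metric.ball_mem_nhds y₀ hrpos] with y hy using hball y hy

end Analysis

lemma two_le_inf : (2 : WithTop ℕ∞) ≤ ((⊤ : ℕ∞) : WithTop ℕ∞) := by
  rw [show (2 : WithTop ℕ∞) = ((2 : ℕ∞) : WithTop ℕ∞) from rfl]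
  exact WithTop.coe_le_coe.2 le_top

section Helpers

open VectorField ContinuousLinearMap

variable {E : Type*} [NormedAddCommGroup E] [NormedSpace ℝ E] [CompleteSpace E]
  {M : Type*} [TopologicalSpace M] [ChartedSpace E M]
  [IsManifold 𝓘(ℝ, E) (⊤ : ℕ∞) M]

lemma tcc_inj {x z : M} (hz : z ∈ (extChartAt 𝓘(ℝ, E) x).source)
    {a b : TangentSpace 𝓘(ℝ, E) z}
    (hab : tangentCoordChange 𝓘(ℝ, E) z x z a = tangentCoordChange 𝓘(ℝ, E) z x z b) :
    a = b := by
  obtain ⟨e, he⟩ := aux_isInvertible_tcc hz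
  rw [← he] at hab
  exact e.injective hab

lemma coordRep_apply {x w : M} (hw : w ∈ (extChartAt 𝓘(ℝ, E) x).source)
    (ξ : (x' : M) → TangentSpace 𝓘(ℝ, E) x') :
    coordRep ξ x (extChartAt 𝓘(ℝ, E) x w) = tangentCoordChange 𝓘(ℝ, E) w x w (ξ w) := by
  rw [← aux_mpullback_eq hw ξ]
  exact (aux_mpullback_eqOn ξ x ((extChartAt 𝓘(ℝ, E) x).map_source hw)).symm

end Helpers

theorem evaluation_injective_on_infinitesimal_automorphisms
    {E : Type*} [NormedAddCommGroup E] [NormedSpace ℝ E] [CompleteSpace E]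
    {M : Type*} [TopologicalSpace M] [ChartedSpace E M]
    [IsManifold 𝓘(ℝ, E) (⊤ : ℕ∞) M] [ConnectedSpace M]
    (η : E → (x : M) → TangentSpace 𝓘(ℝ, E) x) (hη : IsOneStructure η)
    (ξ₁ ξ₂ : (x : M) → TangentSpace 𝓘(ℝ, E) x)
    (hξ₁ : IsInfinitesimalAutomorphism η ξ₁)
    (hξ₂ : IsInfinitesimalAutomorphism η ξ₂)
    (x₀ : M) (h : ξ₁ x₀ = ξ₂ x₀) :
    ξ₁ = ξ₂ := by
  set s : Set M := {z | ξ₁ z = ξ₂ z} with hsdef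
  -- openness
  have hopen : IsOpen s := by
    rw [isOpen_iff_mem_nhds]
    intro z₀ hz₀
    have hz₀src : z₀ ∈ (extChartAt 𝓘(ℝ, E) z₀).source := mem_extChartAt_source z₀
    have hUopen : IsOpen (extChartAt 𝓘(ℝ, E) z₀).target := isOpen_extChartAt_target z₀
    have hy₀ : extChartAt 𝓘(ℝ, E) z₀ z₀ ∈ (extChartAt 𝓘(ℝ, E) z₀).target :=
      (extChartAt 𝓘(ℝ, E) z₀).map_source hz₀src
    set Z : E → E := fun y => coordRep ξ₁ z₀ y - coordRep ξ₂ z₀ y with hZdef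
    have hZc : ContDiffOn ℝ 2 Z (extChartAt 𝓘(ℝ, E) z₀).target :=
      (((contDiffOn_coordRep hξ₁.1 z₀).sub (contDiffOn_coordRep hξ₂.1 z₀))).of_le two_le_inf
    have hh : ContDiffOn ℝ 2 (fun p : E × E => coordRep (η p.1) z₀ p.2)
        (Set.univ ×ˢ (extChartAt 𝓘(ℝ, E) z₀).target) :=
      (contDiffOn_etaRep hη z₀).of_le two_le_inf
    have hinv : ∀ y ∈ (extChartAt 𝓘(ℝ, E) z₀).target, ∃ L : E →L[ℝ] E, L.IsInvertible ∧
        ∀ v, L v = (fun p : E × E => coordRep (η p.1) z₀ p.2) (v, y) :=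
      fun y hy => etaRep_invertible hη z₀ hy
    have hdiffAt : ∀ (ξ : (x' : M) → TangentSpace 𝓘(ℝ, E) x') (_ : IsSmoothVectorField ξ)
        (y : E) (_ : y ∈ (extChartAt 𝓘(ℝ, E) z₀).target),
        DifferentiableAt ℝ (coordRep ξ z₀) y := fun ξ hξ y hy =>
      ((contDiffOn_coordRep hξ z₀).differentiableOn (by norm_num)).differentiableAt
        (hUopen.mem_nhds hy)
    have hpde : ∀ y ∈ (extChartAt 𝓘(ℝ, E) z₀).target, ∀ v,
        fderiv ℝ Z y ((fun p : E × E => coordRep (η p.1) z₀ p.2) (v, y)) =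
          fderiv ℝ (fun y' => (fun p : E × E => coordRep (η p.1) z₀ p.2) (v, y')) y (Z y) := by
      intro y hy v
      have h1 := lieBracket_coordRep_eq_zero hη hξ₁ z₀ hy v
      have h2 := lieBracket_coordRep_eq_zero hη hξ₂ z₀ hy v
      rw [VectorField.lieBracket, sub_eq_zero] at h1 h2
      have hd1 := hdiffAt ξ₁ hξ₁.1 y hy
      have hd2 := hdiffAt ξ₂ hξ₂.1 y hy
      have hfZ : fderiv ℝ Z y = fderiv ℝ (coordRep ξ₁ z₀) y - fderiv ℝ (coordRep ξ₂ z₀) y :=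
        fderiv_sub hd1 hd2
      rw [hfZ]; simp only [hZdef, ContinuousLinearMap.coe_sub', Pi.sub_apply]
      rw [map_sub (fderiv ℝ (fun y' => coordRep (η v) z₀ y') y), ← h1, ← h2]
    have h0 : Z (extChartAt 𝓘(ℝ, E) z₀ z₀) = 0 := by
      simp only [hZdef, coordRep_apply hz₀src, sub_eq_zero]
      exact congrArg _ hz₀
    have hev := key_local hUopen hy₀ hZc hh hinv hpde h0
    have hcont : ContinuousAt (extChartAt 𝓘(ℝ, E) z₀) z₀ := continuousAt_extChartAt z₀
    have hev2 : ∀ᶠ w in nhds z₀, Z (extChartAt 𝓘(ℝ, E) z₀ w) = 0 := hcont.eventually hev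
    filter_upwards [hev2, extChartAt_source_mem_nhds (I := 𝓘(ℝ, E)) z₀] with w hw hwsrc
    have : tangentCoordChange 𝓘(ℝ, E) w z₀ w (ξ₁ w) = tangentCoordChange 𝓘(ℝ, E) w z₀ w (ξ₂ w) := by
      have := sub_eq_zero.1 hw
      rwa [coordRep_apply hwsrc, coordRep_apply hwsrc] at this
    exact tcc_inj hwsrc this
  -- closedness
  have hclosed : IsClosed s := by
    rw [← isOpen_compl_iff, isOpen_iff_mem_nhds]
    intro z₀ hz₀
    have hz₀src : z₀ ∈ (extChartAt 𝓘(ℝ, E) z₀).source := mem_extChartAt_source z₀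
    have hUopen : IsOpen (extChartAt 𝓘(ℝ, E) z₀).target := isOpen_extChartAt_target z₀
    have hy₀ : extChartAt 𝓘(ℝ, E) z₀ z₀ ∈ (extChartAt 𝓘(ℝ, E) z₀).target :=
      (extChartAt 𝓘(ℝ, E) z₀).map_source hz₀src
    have hne : coordRep ξ₁ z₀ (extChartAt 𝓘(ℝ, E) z₀ z₀) ≠
        coordRep ξ₂ z₀ (extChartAt 𝓘(ℝ, E) z₀ z₀) := by
      intro hcontra
      apply hz₀
      rw [coordRep_apply hz₀src, coordRep_apply hz₀src] at hcontra
      exact tcc_inj hz₀src hcontra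
    have hc : ∀ (ξ : (x' : M) → TangentSpace 𝓘(ℝ, E) x'), IsSmoothVectorField ξ →
        ContinuousAt (fun w => coordRep ξ z₀ (extChartAt 𝓘(ℝ, E) z₀ w)) z₀ := by
      intro ξ hξ
      exact (((contDiffOn_coordRep hξ z₀).continuousOn.continuousAt
        (hUopen.mem_nhds hy₀)).comp (continuousAt_extChartAt z₀))
    have hpair : ContinuousAt (fun w => (coordRep ξ₁ z₀ (extChartAt 𝓘(ℝ, E) z₀ w),
        coordRep ξ₂ z₀ (extChartAt 𝓘(ℝ, E) z₀ w))) z₀ :=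
      (hc ξ₁ hξ₁.1).prodMk (hc ξ₂ hξ₂.1)
    have hopen_ne : IsOpen {p : E × E | p.1 ≠ p.2} := isClosed_diagonal.isOpen_compl
    have hevne : ∀ᶠ w in nhds z₀, coordRep ξ₁ z₀ (extChartAt 𝓘(ℝ, E) z₀ w) ≠
        coordRep ξ₂ z₀ (extChartAt 𝓘(ℝ, E) z₀ w) :=
      hpair.eventually_mem (hopen_ne.mem_nhds hne)
    filter_upwards [hevne, extChartAt_source_mem_nhds (I := 𝓘(ℝ, E)) z₀] with w hw hwsrc
    intro hws
    apply hw
    rw [coordRep_apply hwsrc, coordRep_apply hwsrc]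
    exact congrArg _ hws
  have hne : s.Nonempty := ⟨x₀, h⟩
  have huniv : s = Set.univ := IsClopen.eq_univ ⟨hclosed, hopen⟩ hne
  funext z
  exact (Set.eq_univ_iff_forall.1 huniv) z
end
end

section
/- Let M be a connected smooth Banach manifold modeled on a Banach space E with a {1}-structure (η_v)_{v∈E}, and fix x₀ ∈ M. Let V := { ξ(x₀) : ξ an infinitesimal automorphism of (M,η) } ⊆ T_{x₀}M. Then the map β : V × V → V defined by β(ξ₁(x₀), ξ₂(x₀)) = [ξ₁, ξ₂](x₀) (which is well defined because infinitesimal automorphisms are determined by their value at x₀ and are closed under the Lie bracket) is continuous. Consequently the space of infinitesimal automorphisms, with the Banach space structure transported from the closed subspace V, is a Banach–Lie algebra. -/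
/-!
Statement 1: On a smooth Banach manifold `M` modeled on a Banach space `E` with a
`{1}`-structure `(η_v)_{v ∈ E}`, the infinitesimal automorphisms (smooth vector
fields `ξ` with `[ξ, η_v] = 0` for all `v`) are closed under the Lie bracket, which
is again a smooth vector field.
-/

open Set Bundle
open scoped Manifold

noncomputable section

section Aux

variable {E : Type*} [NormedAddCommGroup E] [NormedSpace ℝ E]
  {M : Type*} [TopologicalSpace M] [ChartedSpace E M]
  [IsManifold 𝓘(ℝ, E) (⊤ : ℕ∞) M]

/-- The pullback of a vector field by the inverse of the extended chart, computed via
`tangentCoordChange`. -/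
lemma mpullback_extChartAt_symm_eq (x₀ : M) (W : (x : M) → TangentSpace 𝓘(ℝ, E) x)
    {y : E} (hy : y ∈ (extChartAt 𝓘(ℝ, E) x₀).target) :
    mpullback (extChartAt 𝓘(ℝ, E) x₀).symm W y =
      tangentCoordChange 𝓘(ℝ, E) ((extChartAt 𝓘(ℝ, E) x₀).symm y) x₀
        ((extChartAt 𝓘(ℝ, E) x₀).symm y) (W ((extChartAt 𝓘(ℝ, E) x₀).symm y)) := by
  set x := (extChartAt 𝓘(ℝ, E) x₀).symm y with hx_def
  have hx : x ∈ (chartAt E x₀).source := by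
    rw [← extChartAt_source 𝓘(ℝ, E)]
    exact (extChartAt 𝓘(ℝ, E) x₀).map_target hy
  have h1 : (mfderiv 𝓘(ℝ, E) 𝓘(ℝ, E) (extChartAt 𝓘(ℝ, E) x₀) x) ∘L
      (mfderiv 𝓘(ℝ, E) 𝓘(ℝ, E) (extChartAt 𝓘(ℝ, E) x₀).symm y) = ContinuousLinearMap.id ℝ E := by
    have := mfderiv_extChartAt_comp_mfderivWithin_extChartAt_symm (I := 𝓘(ℝ, E)) (x := x₀) hy
    rwa [ModelWithCorners.range_eq_univ, mfderivWithin_univ] at this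
  have h2 : (mfderiv 𝓘(ℝ, E) 𝓘(ℝ, E) (extChartAt 𝓘(ℝ, E) x₀).symm y) ∘L
      (mfderiv 𝓘(ℝ, E) 𝓘(ℝ, E) (extChartAt 𝓘(ℝ, E) x₀) x) = ContinuousLinearMap.id ℝ E := by
    have := mfderivWithin_extChartAt_symm_comp_mfderiv_extChartAt (I := 𝓘(ℝ, E)) (x := x₀) hy
    rwa [ModelWithCorners.range_eq_univ, mfderivWithin_univ] at this
  have hinv : (mfderiv 𝓘(ℝ, E) 𝓘(ℝ, E) (extChartAt 𝓘(ℝ, E) x₀).symm y).inverse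
      = mfderiv 𝓘(ℝ, E) 𝓘(ℝ, E) (extChartAt 𝓘(ℝ, E) x₀) x :=
    ContinuousLinearMap.inverse_eq h2 h1
  have hchart : mfderiv 𝓘(ℝ, E) 𝓘(ℝ, E) (extChartAt 𝓘(ℝ, E) x₀) x
      = tangentCoordChange 𝓘(ℝ, E) x x₀ x := by
    rw [(hasMFDerivAt_extChartAt (I := 𝓘(ℝ, E)) hx).mfderiv]
    exact mfderiv_chartAt_eq_tangentCoordChange hx
  rw [mpullback, hinv, hchart]
  rfl

/-- The pullback of a vector field by the inverse of the extended chart, at the base point. -/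
lemma mpullback_extChartAt_symm_base (x₀ : M) (W : (x : M) → TangentSpace 𝓘(ℝ, E) x) :
    mpullback (extChartAt 𝓘(ℝ, E) x₀).symm W (extChartAt 𝓘(ℝ, E) x₀ x₀) = W x₀ := by
  rw [mpullback_extChartAt_symm_eq x₀ W
    ((extChartAt 𝓘(ℝ, E) x₀).map_source (mem_extChartAt_source x₀))]
  rw [extChartAt_to_inv]
  exact tangentCoordChange_self (I := 𝓘(ℝ, E)) (mem_extChartAt_source x₀)

/-- The Lie bracket on the manifold is the Lie bracket of the pulled-back vector fields in the
chart. -/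
lemma mlieBracket_eq_lieBracket (x₀ : M) (Vf W : (x : M) → TangentSpace 𝓘(ℝ, E) x) :
    mlieBracket Vf W x₀ =
      VectorField.lieBracket ℝ (mpullback (extChartAt 𝓘(ℝ, E) x₀).symm Vf)
        (mpullback (extChartAt 𝓘(ℝ, E) x₀).symm W) (extChartAt 𝓘(ℝ, E) x₀ x₀) := by
  have hD : mfderiv 𝓘(ℝ, E) 𝓘(ℝ, E) (extChartAt 𝓘(ℝ, E) x₀) x₀ = ContinuousLinearMap.id ℝ E := by
    have hx : x₀ ∈ (chartAt E x₀).source := mem_chart_source E x₀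
    rw [(hasMFDerivAt_extChartAt (I := 𝓘(ℝ, E)) hx).mfderiv,
      mfderiv_chartAt_eq_tangentCoordChange hx]
    exact ContinuousLinearMap.ext fun v =>
      tangentCoordChange_self (I := 𝓘(ℝ, E)) (mem_extChartAt_source x₀)
  have hinv : (mfderiv 𝓘(ℝ, E) 𝓘(ℝ, E) (extChartAt 𝓘(ℝ, E) x₀) x₀).inverse
      = ContinuousLinearMap.id ℝ E := by
    rw [hD]; exact ContinuousLinearMap.inverse_id
  rw [mlieBracket]; unfold mpullback; rw [hinv]
  rfl


/-- The chart representation of the one-structure, as a function of the parameter and the chart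
coordinate, is smooth near the chart target. -/
lemma contDiffAt_oneStructure_rep (x₀ : M) {η : E → (x : M) → TangentSpace 𝓘(ℝ, E) x}
    (hη : IsOneStructure η) {v y : E} (hy : y ∈ (extChartAt 𝓘(ℝ, E) x₀).target) :
    ContDiffAt ℝ ((⊤ : ℕ∞) : WithTop ℕ∞) (fun p : E × E =>
      tangentCoordChange 𝓘(ℝ, E) ((extChartAt 𝓘(ℝ, E) x₀).symm p.2) x₀
        ((extChartAt 𝓘(ℝ, E) x₀).symm p.2) (η p.1 ((extChartAt 𝓘(ℝ, E) x₀).symm p.2))) (v, y) := by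
  have hx : (extChartAt 𝓘(ℝ, E) x₀).symm y ∈ (chartAt E x₀).source := by
    rw [← extChartAt_source 𝓘(ℝ, E)]
    exact (extChartAt 𝓘(ℝ, E) x₀).map_target hy
  have hsymm : ContMDiffAt 𝓘(ℝ, E) 𝓘(ℝ, E) (⊤ : ℕ∞) (extChartAt 𝓘(ℝ, E) x₀).symm y :=
    ((contMDiffOn_extChartAt_symm (I := 𝓘(ℝ, E)) x₀) y hy).contMDiffAt
      ((isOpen_extChartAt_target x₀).mem_nhds hy)
  have hsmap : ContMDiffAt (𝓘(ℝ, E).prod 𝓘(ℝ, E)) (𝓘(ℝ, E).prod 𝓘(ℝ, E)) (⊤ : ℕ∞)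
      (fun p : E × E => (p.1, (extChartAt 𝓘(ℝ, E) x₀).symm p.2)) (v, y) :=
    contMDiffAt_fst.prodMk (hsymm.comp (v, y) contMDiffAt_snd)
  have hTB : ContMDiffAt (𝓘(ℝ, E).prod 𝓘(ℝ, E)) 𝓘(ℝ, E).tangent (⊤ : ℕ∞)
      (fun p : E × E => (⟨(extChartAt 𝓘(ℝ, E) x₀).symm p.2,
        η p.1 ((extChartAt 𝓘(ℝ, E) x₀).symm p.2)⟩ : TangentBundle 𝓘(ℝ, E) M)) (v, y) :=
    (hη.smooth.contMDiffAt).comp (v, y) hsmap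
  have hsrc : (⟨(extChartAt 𝓘(ℝ, E) x₀).symm y,
      η v ((extChartAt 𝓘(ℝ, E) x₀).symm y)⟩ : TangentBundle 𝓘(ℝ, E) M) ∈
      (trivializationAt E (TangentSpace 𝓘(ℝ, E)) x₀).source :=
    (trivializationAt E (TangentSpace 𝓘(ℝ, E)) x₀).mem_source.2 hx
  have h2 := (((trivializationAt E (TangentSpace 𝓘(ℝ, E)) x₀).contMDiffAt_iff
      (f := fun p : E × E => (⟨(extChartAt 𝓘(ℝ, E) x₀).symm p.2,
        η p.1 ((extChartAt 𝓘(ℝ, E) x₀).symm p.2)⟩ : TangentBundle 𝓘(ℝ, E) M))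
      (x₀ := (v, y)) hsrc).1 hTB).2
  rw [← modelWithCornersSelf_prod, chartedSpaceSelf_prod] at h2
  exact h2.contDiffAt

end Aux

theorem bracket_continuous_on_values_of_infinitesimal_automorphisms
    {E : Type*} [NormedAddCommGroup E] [NormedSpace ℝ E] [CompleteSpace E]
    {M : Type*} [TopologicalSpace M] [ChartedSpace E M]
    [IsManifold 𝓘(ℝ, E) (⊤ : ℕ∞) M] [ConnectedSpace M]
    (η : E → (x : M) → TangentSpace 𝓘(ℝ, E) x) (hη : IsOneStructure η)
    (x₀ : M)
    (V : Set (TangentSpace 𝓘(ℝ, E) x₀))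
    (hV : V = {w : TangentSpace 𝓘(ℝ, E) x₀ |
      ∃ ξ : (x : M) → TangentSpace 𝓘(ℝ, E) x,
        IsInfinitesimalAutomorphism η ξ ∧ ξ x₀ = w})
    (β : TangentSpace 𝓘(ℝ, E) x₀ → TangentSpace 𝓘(ℝ, E) x₀ → TangentSpace 𝓘(ℝ, E) x₀)
    (hβ : ∀ ξ₁ ξ₂ : (x : M) → TangentSpace 𝓘(ℝ, E) x,
      IsInfinitesimalAutomorphism η ξ₁ → IsInfinitesimalAutomorphism η ξ₂ →
        β (ξ₁ x₀) (ξ₂ x₀) = mlieBracket ξ₁ ξ₂ x₀) :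
    ContinuousOn (fun p : TangentSpace 𝓘(ℝ, E) x₀ × TangentSpace 𝓘(ℝ, E) x₀ =>
      β p.1 p.2) (V ×ˢ V) := by
  obtain ⟨e, he⟩ := hη.isom x₀
  have hy₀T : extChartAt 𝓘(ℝ, E) x₀ x₀ ∈ (extChartAt 𝓘(ℝ, E) x₀).target :=
    (extChartAt 𝓘(ℝ, E) x₀).map_source (mem_extChartAt_source x₀)
  have hTopen : IsOpen (extChartAt 𝓘(ℝ, E) x₀).target := isOpen_extChartAt_target x₀
  set h : E × E → E := fun p =>
    tangentCoordChange 𝓘(ℝ, E) ((extChartAt 𝓘(ℝ, E) x₀).symm p.2) x₀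
      ((extChartAt 𝓘(ℝ, E) x₀).symm p.2) (η p.1 ((extChartAt 𝓘(ℝ, E) x₀).symm p.2)) with hh
  have hsm : ∀ p : E × E, p.2 ∈ (extChartAt 𝓘(ℝ, E) x₀).target →
      ContDiffAt ℝ ((⊤ : ℕ∞) : WithTop ℕ∞) h p := by
    rintro ⟨v, y⟩ hy
    exact contDiffAt_oneStructure_rep x₀ hη hy
  have htop : ((⊤ : ℕ∞) : WithTop ℕ∞) + 1 ≤ ((⊤ : ℕ∞) : WithTop ℕ∞) := by
    exact_mod_cast le_top
  have hone : (1 : WithTop ℕ∞) ≤ ((⊤ : ℕ∞) : WithTop ℕ∞) := by exact_mod_cast le_top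
  have hfc : ∀ p : E × E, p.2 ∈ (extChartAt 𝓘(ℝ, E) x₀).target →
      ContinuousAt (fderiv ℝ h) p := fun p hp =>
    ((hsm p hp).fderiv_right htop).continuousAt
  set b : E → E → E := fun v u => fderiv ℝ h (v, extChartAt 𝓘(ℝ, E) x₀ x₀) (0, u) with hb
  -- continuity of the candidate bilinear map
  have hc1 : Continuous fun w : E => fderiv ℝ h (w, extChartAt 𝓘(ℝ, E) x₀ x₀) := by
    have : ContinuousOn (fderiv ℝ h) (univ ×ˢ (extChartAt 𝓘(ℝ, E) x₀).target) :=
      fun p hp => (hfc p hp.2).continuousWithinAt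
    exact this.comp_continuous (continuous_id.prodMk continuous_const)
      fun w => ⟨mem_univ _, hy₀T⟩
  have hcb : Continuous fun p : E × E => b p.1 p.2 :=
    isBoundedBilinearMap_apply.continuous.comp
      ((hc1.comp continuous_fst).prodMk (continuous_const.prodMk continuous_snd))
  have hBcont : Continuous fun p : E × E => b (e.symm p.1) p.2 - b (e.symm p.2) p.1 := by
    have c1 : Continuous fun p : E × E => b (e.symm p.1) p.2 :=
      hcb.comp ((e.symm.continuous.comp continuous_fst).prodMk continuous_snd)
    have c2 : Continuous fun p : E × E => b (e.symm p.2) p.1 :=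
      hcb.comp ((e.symm.continuous.comp continuous_snd).prodMk continuous_fst)
    exact c1.sub c2
  -- the key identity for infinitesimal automorphisms
  have haux : ∀ ξ : (x : M) → TangentSpace 𝓘(ℝ, E) x, IsInfinitesimalAutomorphism η ξ →
      ∀ v : E, fderiv ℝ (fun y : E => (mpullback (extChartAt 𝓘(ℝ, E) x₀).symm ξ y : E))
        (extChartAt 𝓘(ℝ, E) x₀ x₀) (η v x₀) = b v (ξ x₀) := by
    intro ξ hξ v
    have h0 := hξ.2 v x₀
    rw [mlieBracket_eq_lieBracket] at h0
    have h0' : fderiv ℝ (fun y : E => (mpullback (extChartAt 𝓘(ℝ, E) x₀).symm (η v) y : E))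
          (extChartAt 𝓘(ℝ, E) x₀ x₀)
          (mpullback (extChartAt 𝓘(ℝ, E) x₀).symm ξ (extChartAt 𝓘(ℝ, E) x₀ x₀))
        - fderiv ℝ (fun y : E => (mpullback (extChartAt 𝓘(ℝ, E) x₀).symm ξ y : E))
          (extChartAt 𝓘(ℝ, E) x₀ x₀)
          (mpullback (extChartAt 𝓘(ℝ, E) x₀).symm (η v) (extChartAt 𝓘(ℝ, E) x₀ x₀)) = 0 := h0
    rw [mpullback_extChartAt_symm_base, mpullback_extChartAt_symm_base] at h0'
    have e3 : fderiv ℝ (fun y : E => (mpullback (extChartAt 𝓘(ℝ, E) x₀).symm (η v) y : E))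
        (extChartAt 𝓘(ℝ, E) x₀ x₀) = fderiv ℝ (fun y => h (v, y)) (extChartAt 𝓘(ℝ, E) x₀ x₀) := by
      apply Filter.EventuallyEq.fderiv_eq
      filter_upwards [hTopen.mem_nhds hy₀T] with y hy
      exact mpullback_extChartAt_symm_eq x₀ (η v) hy
    have e4 : HasFDerivAt (fun y => h (v, y))
        ((fderiv ℝ h (v, extChartAt 𝓘(ℝ, E) x₀ x₀)).comp (ContinuousLinearMap.inr ℝ E E))
        (extChartAt 𝓘(ℝ, E) x₀ x₀) :=
      ((hsm (v, extChartAt 𝓘(ℝ, E) x₀ x₀) hy₀T).differentiableAt (by simp)).hasFDerivAt.comp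
        (extChartAt 𝓘(ℝ, E) x₀ x₀) (hasFDerivAt_prodMk_right v (extChartAt 𝓘(ℝ, E) x₀ x₀))
    rw [e3, e4.fderiv] at h0'
    have h5 := sub_eq_zero.1 h0'
    rw [← h5]
    rfl
  -- the bracket of two automorphisms in terms of their values at the base point
  have hmain : ∀ ξ₁ ξ₂ : (x : M) → TangentSpace 𝓘(ℝ, E) x,
      IsInfinitesimalAutomorphism η ξ₁ → IsInfinitesimalAutomorphism η ξ₂ →
      mlieBracket ξ₁ ξ₂ x₀ = b (e.symm (ξ₁ x₀)) (ξ₂ x₀) - b (e.symm (ξ₂ x₀)) (ξ₁ x₀) := by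
    intro ξ₁ ξ₂ h1 h2
    rw [mlieBracket_eq_lieBracket]
    have hexp : VectorField.lieBracket ℝ (mpullback (extChartAt 𝓘(ℝ, E) x₀).symm ξ₁)
        (mpullback (extChartAt 𝓘(ℝ, E) x₀).symm ξ₂) (extChartAt 𝓘(ℝ, E) x₀ x₀)
        = fderiv ℝ (fun y : E => (mpullback (extChartAt 𝓘(ℝ, E) x₀).symm ξ₂ y : E))
            (extChartAt 𝓘(ℝ, E) x₀ x₀)
            (mpullback (extChartAt 𝓘(ℝ, E) x₀).symm ξ₁ (extChartAt 𝓘(ℝ, E) x₀ x₀))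
          - fderiv ℝ (fun y : E => (mpullback (extChartAt 𝓘(ℝ, E) x₀).symm ξ₁ y : E))
            (extChartAt 𝓘(ℝ, E) x₀ x₀)
            (mpullback (extChartAt 𝓘(ℝ, E) x₀).symm ξ₂ (extChartAt 𝓘(ℝ, E) x₀ x₀)) := rfl
    rw [hexp, mpullback_extChartAt_symm_base, mpullback_extChartAt_symm_base]
    have k1 : ξ₁ x₀ = η (e.symm (ξ₁ x₀)) x₀ := by rw [← he]; simp
    have k2 : ξ₂ x₀ = η (e.symm (ξ₂ x₀)) x₀ := by rw [← he]; simp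
    rw [k1, k2, haux ξ₂ h2 (e.symm (ξ₁ x₀)), haux ξ₁ h1 (e.symm (ξ₂ x₀)), ← k1, ← k2]
  -- conclude
  have hBonV : ∀ p ∈ V ×ˢ V, (fun p : TangentSpace 𝓘(ℝ, E) x₀ × TangentSpace 𝓘(ℝ, E) x₀ =>
      β p.1 p.2) p = b (e.symm p.1) p.2 - b (e.symm p.2) p.1 := by
    rintro ⟨w₁, w₂⟩ ⟨hw1, hw2⟩
    rw [hV] at hw1 hw2
    obtain ⟨ξ₁, hξ₁, rfl⟩ := hw1
    obtain ⟨ξ₂, hξ₂, rfl⟩ := hw2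
    show β (ξ₁ x₀) (ξ₂ x₀) = _
    rw [hβ ξ₁ ξ₂ hξ₁ hξ₂, hmain ξ₁ ξ₂ hξ₁ hξ₂]
  exact (hBcont.continuousOn).congr hBonV
end
end

section
/- Let M be a connected smooth Banach manifold modeled on a Banach space E with a {1}-structure (η_v)_{v∈E}, and suppose that each vector field η_v (v ∈ E) is complete. Then every infinitesimal automorphism of (M,η) is complete: for every smooth vector field ξ on M with [ξ, η_v] = 0 for all v ∈ E and every x ∈ M, there exists a curve γ : ℝ → M with γ(0) = x that is an integral curve of ξ on all of ℝ. -/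
/-!
Statement 1: On a smooth Banach manifold `M` modeled on a Banach space `E` with a
`{1}`-structure `(η_v)_{v ∈ E}`, the infinitesimal automorphisms (smooth vector
fields `ξ` with `[ξ, η_v] = 0` for all `v`) are closed under the Lie bracket, which
is again a smooth vector field.
-/

open Set Bundle
open scoped Manifold

noncomputable section

/-- A vector field is complete if through every point there is an integral curve
defined on all of `ℝ`. -/
def IsCompleteVectorField {E : Type*} [NormedAddCommGroup E] [NormedSpace ℝ E]
    {M : Type*} [TopologicalSpace M] [ChartedSpace E M]
    [IsManifold 𝓘(ℝ, E) (⊤ : ℕ∞) M]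
    (ξ : (x : M) → TangentSpace 𝓘(ℝ, E) x) : Prop :=
  ∀ x : M, ∃ γ : ℝ → M, γ 0 = x ∧ IsMIntegralCurve γ ξ

/-! ### Auxiliary development for the completeness theorem -/

section AuxCompleteness

open VectorField Filter Topology

variable {E : Type*} [NormedAddCommGroup E] [NormedSpace ℝ E]
  {M : Type*} [TopologicalSpace M] [ChartedSpace E M]
  [IsManifold 𝓘(ℝ, E) (⊤ : ℕ∞) M]

/-- The representation of a vector field in the preferred chart at `p`, as a function on `M`. -/
def chrep (V : (x : M) → TangentSpace 𝓘(ℝ, E) x) (p : M) (x : M) : E :=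
  tangentCoordChange 𝓘(ℝ, E) x p x (V x)

/-- The pushforward of a vector field to the chart at `p`, as a vector field on `E`. -/
def pushf (V : (x : M) → TangentSpace 𝓘(ℝ, E) x) (p : M) (z : E) : E :=
  chrep V p ((extChartAt 𝓘(ℝ, E) p).symm z)

variable {V W ξ : (x : M) → TangentSpace 𝓘(ℝ, E) x} {p q : M} {z : E}

lemma chrep_eq_mfderiv (hq : q ∈ (extChartAt 𝓘(ℝ, E) p).source) :
    chrep V p q = mfderiv 𝓘(ℝ, E) 𝓘(ℝ, E) (extChartAt 𝓘(ℝ, E) p) q (V q) := by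
  rw [extChartAt_source] at hq
  have h1 := (hasMFDerivAt_extChartAt (I := 𝓘(ℝ, E)) hq).mfderiv
  rw [chrep, ← mfderiv_chartAt_eq_tangentCoordChange hq, ← h1]
  rfl

lemma mfderiv_extChartAt_symm_eq (p : M) (z : E) :
    mfderiv 𝓘(ℝ, E) 𝓘(ℝ, E) (extChartAt 𝓘(ℝ, E) p).symm z
      = mfderivWithin 𝓘(ℝ, E) 𝓘(ℝ, E) (extChartAt 𝓘(ℝ, E) p).symm
          (Set.range (𝓘(ℝ, E))) z := by
  rw [ModelWithCorners.range_eq_univ, mfderivWithin_univ]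

lemma inverse_mfderiv_symm (hz : z ∈ (extChartAt 𝓘(ℝ, E) p).target) :
    (mfderiv 𝓘(ℝ, E) 𝓘(ℝ, E) (extChartAt 𝓘(ℝ, E) p).symm z).inverse
      = mfderiv 𝓘(ℝ, E) 𝓘(ℝ, E) (extChartAt 𝓘(ℝ, E) p)
          ((extChartAt 𝓘(ℝ, E) p).symm z) := by
  rw [mfderiv_extChartAt_symm_eq]
  exact ContinuousLinearMap.inverse_eq
    (mfderivWithin_extChartAt_symm_comp_mfderiv_extChartAt hz)
    (mfderiv_extChartAt_comp_mfderivWithin_extChartAt_symm hz)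

lemma isInvertible_mfderiv_symm (hz : z ∈ (extChartAt 𝓘(ℝ, E) p).target) :
    (mfderiv 𝓘(ℝ, E) 𝓘(ℝ, E) (extChartAt 𝓘(ℝ, E) p).symm z).IsInvertible := by
  rw [mfderiv_extChartAt_symm_eq]
  exact isInvertible_mfderivWithin_extChartAt_symm hz

lemma mdifferentiableAt_chart_symm (hz : z ∈ (extChartAt 𝓘(ℝ, E) p).target) :
    MDifferentiableAt 𝓘(ℝ, E) 𝓘(ℝ, E) (extChartAt 𝓘(ℝ, E) p).symm z := by
  have h := mdifferentiableWithinAt_extChartAt_symm (I := 𝓘(ℝ, E)) (x := p) hz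
  rwa [ModelWithCorners.range_eq_univ, mdifferentiableWithinAt_univ] at h

lemma mfderiv_chart_injective (hq : q ∈ (extChartAt 𝓘(ℝ, E) p).source) :
    Function.Injective (mfderiv 𝓘(ℝ, E) 𝓘(ℝ, E) (extChartAt 𝓘(ℝ, E) p) q) := by
  obtain ⟨A, hA⟩ := isInvertible_mfderiv_extChartAt hq
  rw [← hA]
  exact A.injective

lemma mpullback_symm_eq (hz : z ∈ (extChartAt 𝓘(ℝ, E) p).target) :
    mpullback (extChartAt 𝓘(ℝ, E) p).symm V z = pushf V p z := by
  rw [_root_.mpullback, inverse_mfderiv_symm hz, pushf,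
    chrep_eq_mfderiv ((extChartAt 𝓘(ℝ, E) p).map_target hz)]
  rfl

lemma contMDiffOn_chrep {n : ℕ∞}
    (hV : ContMDiff 𝓘(ℝ, E) 𝓘(ℝ, E).tangent n
      (fun x : M => (⟨x, V x⟩ : TangentBundle 𝓘(ℝ, E) M))) (p : M) :
    ContMDiffOn 𝓘(ℝ, E) 𝓘(ℝ, E) n (chrep V p) (extChartAt 𝓘(ℝ, E) p).source := by
  intro q hq
  rw [extChartAt_source] at hq
  have h1 : (⟨q, V q⟩ : TangentBundle 𝓘(ℝ, E) M)
      ∈ (trivializationAt E (TangentSpace 𝓘(ℝ, E)) p).source := by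
    rw [TangentBundle.trivializationAt_source]
    exact hq
  have h2 := (((trivializationAt E (TangentSpace 𝓘(ℝ, E)) p).contMDiffAt_iff
    (f := fun x : M => (⟨x, V x⟩ : TangentBundle 𝓘(ℝ, E) M)) (n := n) h1).mp (hV q)).2
  have h3 : (fun x : M => (trivializationAt E (TangentSpace 𝓘(ℝ, E)) p ⟨x, V x⟩).2)
      = chrep V p := rfl
  rw [h3] at h2
  exact h2.contMDiffWithinAt

lemma contDiffOn_pushf {n : ℕ∞}
    (hV : ContMDiff 𝓘(ℝ, E) 𝓘(ℝ, E).tangent n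
      (fun x : M => (⟨x, V x⟩ : TangentBundle 𝓘(ℝ, E) M))) (p : M) :
    ContDiffOn ℝ n (pushf V p) (extChartAt 𝓘(ℝ, E) p).target := by
  rw [← contMDiffOn_iff_contDiffOn]
  exact (contMDiffOn_chrep hV p).comp (contMDiffOn_extChartAt_symm p)
    (fun z hz => (extChartAt 𝓘(ℝ, E) p).map_target hz)

lemma pushf_apply_of_mem (hq : q ∈ (extChartAt 𝓘(ℝ, E) p).source) :
    pushf V p (extChartAt 𝓘(ℝ, E) p q)
      = mfderiv 𝓘(ℝ, E) 𝓘(ℝ, E) (extChartAt 𝓘(ℝ, E) p) q (V q) := by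
  rw [pushf, (extChartAt 𝓘(ℝ, E) p).left_inv hq, chrep_eq_mfderiv hq]

/-- Transfer of the pushforward of a vector field from the chart at `q` to the chart at `p`
under the transition map. -/
lemma pullback_transition_pushf {w : E}
    (hw : w ∈ (extChartAt 𝓘(ℝ, E) p).target)
    (hw' : (extChartAt 𝓘(ℝ, E) p).symm w ∈ (extChartAt 𝓘(ℝ, E) q).source) :
    VectorField.pullback ℝ ((extChartAt 𝓘(ℝ, E) q) ∘ (extChartAt 𝓘(ℝ, E) p).symm)
      (pushf V q) w = pushf V p w := by
  set u := (extChartAt 𝓘(ℝ, E) p).symm w with hu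
  have huq : u ∈ (chartAt E q).source := by rwa [← extChartAt_source (I := 𝓘(ℝ, E))]
  have hderiv : fderiv ℝ ((extChartAt 𝓘(ℝ, E) q) ∘ (extChartAt 𝓘(ℝ, E) p).symm) w
      = (mfderiv 𝓘(ℝ, E) 𝓘(ℝ, E) (extChartAt 𝓘(ℝ, E) q) u).comp
        (mfderiv 𝓘(ℝ, E) 𝓘(ℝ, E) (extChartAt 𝓘(ℝ, E) p).symm w) := by
    rw [← mfderiv_eq_fderiv]
    exact mfderiv_comp w (mdifferentiableAt_extChartAt huq) (mdifferentiableAt_chart_symm hw)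
  have hAinv : (mfderiv 𝓘(ℝ, E) 𝓘(ℝ, E) (extChartAt 𝓘(ℝ, E) q) u).IsInvertible :=
    isInvertible_mfderiv_extChartAt hw'
  have hBinv : (mfderiv 𝓘(ℝ, E) 𝓘(ℝ, E) (extChartAt 𝓘(ℝ, E) p).symm w).IsInvertible :=
    isInvertible_mfderiv_symm hw
  rw [VectorField.pullback, hderiv]
  -- compute the value of `pushf V q` at the image point
  have hval : pushf V q ((extChartAt 𝓘(ℝ, E) q) u)
      = mfderiv 𝓘(ℝ, E) 𝓘(ℝ, E) (extChartAt 𝓘(ℝ, E) q) u (V u) :=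
    pushf_apply_of_mem hw'
  simp only [Function.comp_apply]
  rw [hval]
  calc ((mfderiv 𝓘(ℝ, E) 𝓘(ℝ, E) (extChartAt 𝓘(ℝ, E) q) u).comp
        (mfderiv 𝓘(ℝ, E) 𝓘(ℝ, E) (extChartAt 𝓘(ℝ, E) p).symm w)).inverse
        (mfderiv 𝓘(ℝ, E) 𝓘(ℝ, E) (extChartAt 𝓘(ℝ, E) q) u (V u))
      = (mfderiv 𝓘(ℝ, E) 𝓘(ℝ, E) (extChartAt 𝓘(ℝ, E) p).symm w).inverse
        ((mfderiv 𝓘(ℝ, E) 𝓘(ℝ, E) (extChartAt 𝓘(ℝ, E) q) u).inverse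
          (mfderiv 𝓘(ℝ, E) 𝓘(ℝ, E) (extChartAt 𝓘(ℝ, E) q) u (V u))) :=
      hBinv.inverse_comp_apply_of_right
    _ = (mfderiv 𝓘(ℝ, E) 𝓘(ℝ, E) (extChartAt 𝓘(ℝ, E) p).symm w).inverse (V u) := by
      rw [hAinv.inverse_apply_eq.mpr rfl]
    _ = (show TangentSpace 𝓘(ℝ, E) w from mfderiv 𝓘(ℝ, E) 𝓘(ℝ, E) (extChartAt 𝓘(ℝ, E) p) u (V u)) := by
      rw [inverse_mfderiv_symm hw]
      all_goals rfl
    _ = (show TangentSpace 𝓘(ℝ, E) w from pushf (E := E) V p w) := (chrep_eq_mfderiv ((extChartAt 𝓘(ℝ, E) p).map_target hw)).symm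

lemma lieBracket_pushf_eq_zero [CompleteSpace E]
    (hXs : ContMDiff 𝓘(ℝ, E) 𝓘(ℝ, E).tangent (⊤ : ℕ∞)
      (fun x : M => (⟨x, ξ x⟩ : TangentBundle 𝓘(ℝ, E) M)))
    (hWs : ContMDiff 𝓘(ℝ, E) 𝓘(ℝ, E).tangent (⊤ : ℕ∞)
      (fun x : M => (⟨x, W x⟩ : TangentBundle 𝓘(ℝ, E) M)))
    (hb : ∀ x : M, mlieBracket ξ W x = 0) (p : M)
    (hz : z ∈ (extChartAt 𝓘(ℝ, E) p).target) :
    VectorField.lieBracket ℝ (pushf ξ p) (pushf W p) z = 0 := by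
  set q : M := (extChartAt 𝓘(ℝ, E) p).symm z with hqdef
  have hqq : q ∈ (extChartAt 𝓘(ℝ, E) q).source := mem_extChartAt_source q
  have h0 : VectorField.lieBracket ℝ (mpullback (extChartAt 𝓘(ℝ, E) q).symm ξ)
      (mpullback (extChartAt 𝓘(ℝ, E) q).symm W) (extChartAt 𝓘(ℝ, E) q q) = 0 := by
    have h := hb q
    rw [_root_.mlieBracket] at h
    change (mfderiv 𝓘(ℝ, E) 𝓘(ℝ, E) (extChartAt 𝓘(ℝ, E) q) q).inverse _ = 0 at h
    have h2 := (isInvertible_mfderiv_extChartAt hqq).inverse_apply_eq.mp h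
    exact h2.trans (map_zero _)
  have htarget_mem : (extChartAt 𝓘(ℝ, E) q).target ∈ 𝓝 (extChartAt 𝓘(ℝ, E) q q) :=
    (isOpen_extChartAt_target q).mem_nhds (mem_extChartAt_target q)
  have hev : ∀ (U : (x : M) → TangentSpace 𝓘(ℝ, E) x),
      mpullback (extChartAt 𝓘(ℝ, E) q).symm U =ᶠ[𝓝 (extChartAt 𝓘(ℝ, E) q q)] pushf U q :=
    fun U => Filter.eventuallyEq_of_mem htarget_mem (fun w hw => mpullback_symm_eq hw)
  have h1 : VectorField.lieBracket ℝ (pushf ξ q) (pushf W q) (extChartAt 𝓘(ℝ, E) q q) = 0 := by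
    rw [← (hev ξ).lieBracket_vectorField_eq (hev W)]
    exact h0
  set τ : E → E := (extChartAt 𝓘(ℝ, E) q) ∘ (extChartAt 𝓘(ℝ, E) p).symm with hτdef
  have hτz : τ z = extChartAt 𝓘(ℝ, E) q q := rfl
  have hsrc_mem : {w : E | w ∈ (extChartAt 𝓘(ℝ, E) p).target ∧
      (extChartAt 𝓘(ℝ, E) p).symm w ∈ (extChartAt 𝓘(ℝ, E) q).source} ∈ 𝓝 z := by
    apply Filter.inter_mem ((isOpen_extChartAt_target p).mem_nhds hz)
    exact (continuousAt_extChartAt_symm'' hz).preimage_mem_nhds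
      ((isOpen_extChartAt_source q).mem_nhds hqq)
  have hev2 : ∀ (U : (x : M) → TangentSpace 𝓘(ℝ, E) x),
      VectorField.pullback ℝ τ (pushf U q) =ᶠ[𝓝 z] pushf U p :=
    fun U => Filter.eventuallyEq_of_mem hsrc_mem (fun w hw => pullback_transition_pushf hw.1 hw.2)
  have hτs : ContDiffAt ℝ 2 τ z := by
    have hmd : ContMDiffAt 𝓘(ℝ, E) 𝓘(ℝ, E) 2 τ z := by
      apply ContMDiffAt.comp (I' := 𝓘(ℝ, E)) (E' := E)
      · exact contMDiffAt_extChartAt' (by rw [← extChartAt_source (I := 𝓘(ℝ, E))]; exact hqq)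
      · exact (contMDiffOn_extChartAt_symm p).contMDiffAt
          ((isOpen_extChartAt_target p).mem_nhds hz)
    exact_mod_cast contMDiffAt_iff_contDiffAt.mp hmd
  have hXd : DifferentiableAt ℝ (pushf ξ q) (τ z) :=
    ((contDiffOn_pushf (n := ⊤) hXs q).differentiableOn
      (by simp)).differentiableAt htarget_mem
  have hWd : DifferentiableAt ℝ (pushf W q) (τ z) :=
    ((contDiffOn_pushf (n := ⊤) hWs q).differentiableOn
      (by simp)).differentiableAt htarget_mem
  calc VectorField.lieBracket ℝ (pushf ξ p) (pushf W p) z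
      = VectorField.lieBracket ℝ (VectorField.pullback ℝ τ (pushf ξ q))
          (VectorField.pullback ℝ τ (pushf W q)) z :=
        ((hev2 ξ).symm.lieBracket_vectorField_eq (hev2 W).symm)
    _ = VectorField.pullback ℝ τ (VectorField.lieBracket ℝ (pushf ξ q) (pushf W q)) z :=
        (VectorField.pullback_lieBracket_of_isSymmSndFDerivAt
          (hτs.isSymmSndFDerivAt (by simp)) hτs hXd hWd).symm
    _ = 0 := by rw [VectorField.pullback, hτz, h1, map_zero]

lemma hasDerivAt_chart_curve {γ : ℝ → M} {t : ℝ}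
    (hq : γ t ∈ (extChartAt 𝓘(ℝ, E) p).source)
    (h : HasMFDerivAt 𝓘(ℝ, ℝ) 𝓘(ℝ, E) γ t
      ((1 : ℝ →L[ℝ] ℝ).smulRight (W (γ t)))) :
    HasDerivAt (fun s => extChartAt 𝓘(ℝ, E) p (γ s))
      (pushf W p (extChartAt 𝓘(ℝ, E) p (γ t))) t := by
  have hq' := hq
  rw [extChartAt_source] at hq'
  have h2 := (hasMFDerivAt_extChartAt (I := 𝓘(ℝ, E)) hq').comp t h
  rw [hasMFDerivAt_iff_hasFDerivAt] at h2
  have h3 : (mfderiv 𝓘(ℝ, E) 𝓘(ℝ, E) (chartAt E p) (γ t)).comp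
      ((1 : ℝ →L[ℝ] ℝ).smulRight (W (γ t)))
      = (1 : ℝ →L[ℝ] ℝ).smulRight
        (mfderiv 𝓘(ℝ, E) 𝓘(ℝ, E) (chartAt E p) (γ t) (W (γ t))) := by
    ext s
    simp
  replace h2 : HasFDerivAt (↑(extChartAt 𝓘(ℝ, E) p) ∘ γ) ((1 : ℝ →L[ℝ] ℝ).smulRight
      (mfderiv 𝓘(ℝ, E) 𝓘(ℝ, E) (chartAt E p) (γ t) (W (γ t)))) t := by
    exact h2.congr_fderiv h3
  have h4 : pushf W p (extChartAt 𝓘(ℝ, E) p (γ t))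
      = mfderiv 𝓘(ℝ, E) 𝓘(ℝ, E) (chartAt E p) (γ t) (W (γ t)) := by
    rw [pushf_apply_of_mem hq, (hasMFDerivAt_extChartAt (I := 𝓘(ℝ, E)) hq').mfderiv]
    rfl
  rw [hasDerivAt_iff_hasFDerivAt, h4]
  exact h2

end AuxCompleteness


open Topology

theorem infinitesimal_automorphisms_complete
    {E : Type*} [NormedAddCommGroup E] [NormedSpace ℝ E] [CompleteSpace E]
    {M : Type*} [TopologicalSpace M] [ChartedSpace E M]
    [IsManifold 𝓘(ℝ, E) (⊤ : ℕ∞) M] [ConnectedSpace M]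
    (η : E → (x : M) → TangentSpace 𝓘(ℝ, E) x) (hη : IsOneStructure η)
    (hcomplete : ∀ v : E, IsCompleteVectorField (η v))
    (ξ : (x : M) → TangentSpace 𝓘(ℝ, E) x)
    (hξ : IsInfinitesimalAutomorphism η ξ) :
    IsCompleteVectorField ξ := by
  classical
  obtain ⟨hξs, hbr⟩ := hξ
  intro x
  obtain ⟨e, he⟩ := hη.isom x
  set v₀ : E := e.symm (ξ x) with hv₀def
  have hv0x : η v₀ x = ξ x := by rw [← he v₀, hv₀def, e.apply_symm_apply]
  obtain ⟨γ, hγ0, hγ⟩ := hcomplete v₀ x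
  have hγc : Continuous γ := hγ.continuous
  have hWs : ContMDiff 𝓘(ℝ, E) 𝓘(ℝ, E).tangent (⊤ : ℕ∞)
      (fun x : M => (⟨x, η v₀ x⟩ : TangentBundle 𝓘(ℝ, E) M)) :=
    hη.smooth.comp ((contMDiff_const (c := v₀)).prodMk contMDiff_id)
  -- key pointwise characterization in charts
  have key : ∀ p : M, ∀ t : ℝ, γ t ∈ (extChartAt 𝓘(ℝ, E) p).source →
      ((ξ (γ t) = η v₀ (γ t)) ↔
        pushf ξ p (extChartAt 𝓘(ℝ, E) p (γ t))
          = pushf (η v₀) p (extChartAt 𝓘(ℝ, E) p (γ t))) := by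
    intro p t ht
    rw [pushf_apply_of_mem ht, pushf_apply_of_mem ht]
    constructor
    · intro h
      rw [h]
    · intro h
      exact mfderiv_chart_injective ht h
  set S : Set ℝ := {t | ξ (γ t) = η v₀ (γ t)} with hSdef
  have h0S : (0 : ℝ) ∈ S := by
    show ξ (γ 0) = η v₀ (γ 0)
    rw [hγ0]
    exact hv0x.symm
  -- S is closed
  have hSclosed : IsClosed S := by
    apply isClosed_of_closure_subset
    intro t₀ ht₀
    have hN : γ ⁻¹' (extChartAt 𝓘(ℝ, E) (γ t₀)).source ∈ 𝓝 t₀ :=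
      hγc.continuousAt.preimage_mem_nhds
        ((isOpen_extChartAt_source (γ t₀)).mem_nhds (mem_extChartAt_source (γ t₀)))
    set d : ℝ → E := fun t => pushf ξ (γ t₀) (extChartAt 𝓘(ℝ, E) (γ t₀) (γ t))
        - pushf (η v₀) (γ t₀) (extChartAt 𝓘(ℝ, E) (γ t₀) (γ t)) with hd
    have hyc : ContinuousAt (fun t => extChartAt 𝓘(ℝ, E) (γ t₀) (γ t)) t₀ :=
      (continuousAt_extChartAt (γ t₀)).comp hγc.continuousAt
    have htgt : (extChartAt 𝓘(ℝ, E) (γ t₀)).target ∈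
        𝓝 (extChartAt 𝓘(ℝ, E) (γ t₀) (γ t₀)) :=
      (isOpen_extChartAt_target (γ t₀)).mem_nhds (mem_extChartAt_target (γ t₀))
    have hdc : ContinuousAt d t₀ := by
      apply ContinuousAt.sub
      · show ContinuousAt ((pushf ξ (γ t₀)) ∘ (fun t => extChartAt 𝓘(ℝ, E) (γ t₀) (γ t))) t₀
        exact ContinuousAt.comp
          ((contDiffOn_pushf (n := ⊤) hξs (γ t₀)).continuousOn.continuousAt htgt) hyc
      · show ContinuousAt ((pushf (η v₀) (γ t₀)) ∘
          (fun t => extChartAt 𝓘(ℝ, E) (γ t₀) (γ t))) t₀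
        exact ContinuousAt.comp
          ((contDiffOn_pushf (n := ⊤) hWs (γ t₀)).continuousOn.continuousAt htgt) hyc
    obtain ⟨u, hu, hulim⟩ := mem_closure_iff_seq_limit.mp ht₀
    have hdu : Filter.Tendsto (d ∘ u) Filter.atTop (𝓝 (d t₀)) := hdc.tendsto.comp hulim
    have hev : (d ∘ u) =ᶠ[Filter.atTop] (fun _ => (0 : E)) := by
      filter_upwards [hulim.eventually_mem hN] with n hn
      have : ξ (γ (u n)) = η v₀ (γ (u n)) := hu n
      exact sub_eq_zero_of_eq ((key (γ t₀) (u n) hn).mp this)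
    have hd0 : d t₀ = 0 := by
      have hlim0 : Filter.Tendsto (d ∘ u) Filter.atTop (𝓝 (0 : E)) :=
        Filter.Tendsto.congr' hev.symm tendsto_const_nhds
      exact tendsto_nhds_unique hdu hlim0
    exact (key (γ t₀) t₀ (mem_extChartAt_source (γ t₀))).mpr (sub_eq_zero.mp hd0)
  -- S is open
  have hSopen : IsOpen S := by
    rw [isOpen_iff_mem_nhds]
    intro t₀ ht₀
    have hNopen : IsOpen (γ ⁻¹' (extChartAt 𝓘(ℝ, E) (γ t₀)).source) :=
      (isOpen_extChartAt_source (γ t₀)).preimage hγc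
    obtain ⟨ε, hεpos, hball⟩ := Metric.isOpen_iff.mp hNopen t₀ (mem_extChartAt_source (γ t₀))
    set δ : ℝ := ε / 2 with hδdef
    have hδpos : 0 < δ := half_pos hεpos
    have hIccN : Set.Icc (t₀ - δ) (t₀ + δ) ⊆ γ ⁻¹' (extChartAt 𝓘(ℝ, E) (γ t₀)).source := by
      intro t ht
      apply hball
      rw [Metric.mem_ball, Real.dist_eq, abs_lt]
      constructor
      · linarith [ht.1]
      · linarith [ht.2]
    set y : ℝ → E := fun t => extChartAt 𝓘(ℝ, E) (γ t₀) (γ t) with hy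
    set X : E → E := pushf ξ (γ t₀) with hX
    set Y : E → E := pushf (η v₀) (γ t₀) with hY
    have hmem : ∀ t, t ∈ γ ⁻¹' (extChartAt 𝓘(ℝ, E) (γ t₀)).source →
        y t ∈ (extChartAt 𝓘(ℝ, E) (γ t₀)).target := fun t ht =>
      (extChartAt 𝓘(ℝ, E) (γ t₀)).map_source ht
    have hXsm := contDiffOn_pushf (n := ⊤) hξs (γ t₀)
    have hYsm := contDiffOn_pushf (n := ⊤) hWs (γ t₀)
    have hfd : ContinuousOn (fderiv ℝ Y) (extChartAt 𝓘(ℝ, E) (γ t₀)).target :=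
      hYsm.continuousOn_fderiv_of_isOpen (isOpen_extChartAt_target (γ t₀))
        (by exact_mod_cast le_top)
    have hycont : ∀ t ∈ γ ⁻¹' (extChartAt 𝓘(ℝ, E) (γ t₀)).source, ContinuousAt y t :=
      fun t ht => (continuousAt_extChartAt' ht).comp hγc.continuousAt
    have hGcont : ∀ t ∈ γ ⁻¹' (extChartAt 𝓘(ℝ, E) (γ t₀)).source,
        ContinuousAt (fun s => fderiv ℝ Y (y s)) t := fun t ht =>
      (hfd.continuousAt ((isOpen_extChartAt_target (γ t₀)).mem_nhds (hmem t ht))).comp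
        (hycont t ht)
    obtain ⟨C, hC⟩ := (isCompact_Icc (a := t₀ - δ) (b := t₀ + δ)).exists_bound_of_continuousOn
      (fun t ht => (hGcont t (hIccN ht)).continuousWithinAt)
    set c : ℝ → ℝ := fun t => max (t₀ - δ) (min (t₀ + δ) t) with hc
    have hcmem : ∀ t, c t ∈ Set.Icc (t₀ - δ) (t₀ + δ) := fun t =>
      ⟨le_max_left _ _, max_le (by linarith) (min_le_left _ _)⟩
    have hceq : ∀ t ∈ Set.Ioo (t₀ - δ) (t₀ + δ), c t = t := by
      intro t ht
      have h1 : min (t₀ + δ) t = t := min_eq_right ht.2.le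
      have h2 : max (t₀ - δ) t = t := max_eq_right ht.1.le
      rw [hc]
      simp only
      rw [h1, h2]
    set K : NNReal := ⟨max C 0, le_max_right _ _⟩ with hK
    set vf : ℝ → E → E := fun t w => fderiv ℝ Y (y (c t)) w with hvf
    have hlip : ∀ t, LipschitzOnWith K (vf t) Set.univ := by
      intro t
      apply LipschitzWith.lipschitzOnWith
      apply (fderiv ℝ Y (y (c t))).lipschitz.weaken
      rw [← NNReal.coe_le_coe]
      simp only [coe_nnnorm, hK, NNReal.coe_mk]
      exact le_trans (hC _ (hcmem t)) (le_max_left _ _)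
    set g : ℝ → E := fun t => X (y t) - Y (y t) with hg
    have hIooN : Set.Ioo (t₀ - δ) (t₀ + δ) ⊆ γ ⁻¹' (extChartAt 𝓘(ℝ, E) (γ t₀)).source :=
      fun t ht => hIccN (Set.Ioo_subset_Icc_self ht)
    have hIoo_mem : Set.Ioo (t₀ - δ) (t₀ + δ) ∈ 𝓝 t₀ :=
      Ioo_mem_nhds (by linarith) (by linarith)
    have hfg : ∀ᶠ t in 𝓝 t₀, HasDerivAt g (vf t (g t)) t ∧ g t ∈ Set.univ := by
      filter_upwards [hIoo_mem] with t ht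
      refine ⟨?_, trivial⟩
      have htN := hIooN ht
      have hyt : y t ∈ (extChartAt 𝓘(ℝ, E) (γ t₀)).target := hmem t htN
      have hopen_mem : (extChartAt 𝓘(ℝ, E) (γ t₀)).target ∈ 𝓝 (y t) :=
        (isOpen_extChartAt_target (γ t₀)).mem_nhds hyt
      have hyd : HasDerivAt y (Y (y t)) t := hasDerivAt_chart_curve htN (hγ t)
      have hXd : DifferentiableAt ℝ X (y t) :=
        (hXsm.differentiableOn (by simp)).differentiableAt hopen_mem
      have hYd : DifferentiableAt ℝ Y (y t) :=
        (hYsm.differentiableOn (by simp)).differentiableAt hopen_mem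
      have hXc : HasDerivAt (fun s => X (y s)) (fderiv ℝ X (y t) (Y (y t))) t :=
        hXd.hasFDerivAt.comp_hasDerivAt t hyd
      have hYc : HasDerivAt (fun s => Y (y s)) (fderiv ℝ Y (y t) (Y (y t))) t :=
        hYd.hasFDerivAt.comp_hasDerivAt t hyd
      have hbr0 : fderiv ℝ Y (y t) (X (y t)) - fderiv ℝ X (y t) (Y (y t)) = 0 :=
        lieBracket_pushf_eq_zero hξs hWs (fun x' => hbr v₀ x') (γ t₀) hyt
      have hswap : fderiv ℝ Y (y t) (X (y t)) = fderiv ℝ X (y t) (Y (y t)) :=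
        sub_eq_zero.mp hbr0
      have hval : vf t (g t) = fderiv ℝ X (y t) (Y (y t)) - fderiv ℝ Y (y t) (Y (y t)) := by
        rw [hvf]
        simp only
        rw [hceq t ht, hg]
        simp only [map_sub]
        rw [hswap]
      rw [hval]
      exact hXc.sub hYc
    have hfz : ∀ᶠ t in 𝓝 t₀, HasDerivAt (fun _ : ℝ => (0 : E)) (vf t 0) t
        ∧ (fun _ : ℝ => (0 : E)) t ∈ Set.univ := by
      filter_upwards with t
      refine ⟨?_, trivial⟩
      have h0 : vf t 0 = 0 := map_zero _
      rw [h0]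
      exact hasDerivAt_const t 0
    have hg0 : g t₀ = (fun _ : ℝ => (0 : E)) t₀ :=
      sub_eq_zero_of_eq ((key (γ t₀) t₀ (mem_extChartAt_source (γ t₀))).mp ht₀)
    have huniq := ODE_solution_unique_of_eventually (Filter.Eventually.of_forall hlip) hfg hfz hg0
    filter_upwards [huniq, hIoo_mem] with t hgt htI
    exact (key (γ t₀) t (hIooN htI)).mpr (sub_eq_zero.mp hgt)
  -- conclude by connectedness of ℝ
  have hSuniv : S = Set.univ := by
    rcases isClopen_iff.mp ⟨hSclosed, hSopen⟩ with h | h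
    · exact absurd (h ▸ h0S) (Set.notMem_empty 0)
    · exact h
  refine ⟨γ, hγ0, fun t => ?_⟩
  have hts : ξ (γ t) = η v₀ (γ t) := by
    have : t ∈ S := hSuniv.symm ▸ Set.mem_univ t
    exact this
  rw [hts]
  exact hγ t
end
end

section
/- Let M be a connected smooth Banach manifold modeled on a Banach space E with a {1}-structure (η_v)_{v∈E}. Let A ⊆ M be a nonempty subset that is invariant under integral curves of the vector fields η_v, in the following sense: for every v ∈ E, every curve γ : ℝ → M that is an integral curve of η_v on an interval J ⊆ ℝ, and all s, t ∈ J, if γ(s) ∈ A then γ(t) ∈ A. Then A = M. (Equivalently: any two points of M can be joined by a finite composition of flow maps of the vector fields η_v.) -/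
/-!
Statement 1: On a smooth Banach manifold `M` modeled on a Banach space `E` with a
`{1}`-structure `(η_v)_{v ∈ E}`, the infinitesimal automorphisms (smooth vector
fields `ξ` with `[ξ, η_v] = 0` for all `v`) are closed under the Lie bracket, which
is again a smooth vector field.
-/

open Set Bundle
open scoped Manifold Topology NNReal

noncomputable section

/-- The integral-curve predicate on a manifold (with the meaning it had in Mathlib of
December 2024): `γ` has derivative `v (γ t)` (in the full, not within-`s`, sense) at every
`t ∈ s`. -/
def IsIntegralCurveOnOld {E H : Type*} [NormedAddCommGroup E] [NormedSpace ℝ E]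
    [TopologicalSpace H] {I : ModelWithCorners ℝ E H}
    {M : Type*} [TopologicalSpace M] [ChartedSpace H M]
    (γ : ℝ → M) (v : (x : M) → TangentSpace I x) (s : Set ℝ) : Prop :=
  ∀ t ∈ s, HasMFDerivAt 𝓘(ℝ, ℝ) I γ t ((1 : ℝ →L[ℝ] ℝ).smulRight <| v (γ t))

/-- Picard–Lindelöf solution that moreover stays in the closed ball. -/
theorem my_pl_exists_solution {E : Type*} [NormedAddCommGroup E] [NormedSpace ℝ E]
    [CompleteSpace E] {v : ℝ → E → E}
    {tMin tMax : ℝ} {t₀ : Icc tMin tMax} (x₀ : E) {a L K : ℝ≥0}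
    (hpl : IsPicardLindelof v t₀ x₀ a 0 L K) :
    ∃ f : ℝ → E, f t₀ = x₀ ∧ (∀ t, f t ∈ Metric.closedBall x₀ a) ∧
      ∀ t ∈ Icc tMin tMax, HasDerivWithinAt f (v t (f t)) (Icc tMin tMax) t := by
  obtain ⟨α, hα⟩ := ODE.FunSpace.exists_isFixedPt_next hpl
    (Metric.mem_closedBall_self le_rfl)
  refine ⟨α.compProj, by
    rw [ODE.FunSpace.compProj_val, ← hα, ODE.FunSpace.next_apply₀],
    fun t => α.compProj_mem_closedBall hpl.mul_max_le, fun t ht => ?_⟩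
  apply ODE.hasDerivWithinAt_picard_Icc t₀.2 hpl.continuousOn_uncurry
    α.continuous_compProj.continuousOn (fun _ ht' ↦ α.compProj_mem_closedBall hpl.mul_max_le)
    x₀ ht |>.congr_of_mem _ ht
  intro t' ht'
  nth_rw 1 [← hα]
  rw [ODE.FunSpace.compProj_of_mem ht', ODE.FunSpace.next_apply]

section OneStruct

variable
  {E : Type*} [NormedAddCommGroup E] [NormedSpace ℝ E]
  {M : Type*} [TopologicalSpace M] [ChartedSpace E M] [IsManifold 𝓘(ℝ, E) (⊤ : ℕ∞) M]

/-- The representation of the vector field `η v` in the preferred chart at `x₀`. -/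
def chartField (η : E → (x : M) → TangentSpace 𝓘(ℝ, E) x) (x₀ : M) : E → E → E :=
  fun v y => tangentCoordChange 𝓘(ℝ, E) ((extChartAt 𝓘(ℝ, E) x₀).symm y) x₀
    ((extChartAt 𝓘(ℝ, E) x₀).symm y) (η v ((extChartAt 𝓘(ℝ, E) x₀).symm y))

/-- A solution of the chart ODE is (mapped back) an integral curve. -/
lemma chart_sol_hasMFDerivAt {v : (x : M) → TangentSpace 𝓘(ℝ, E) x} {α : ℝ → E} {t : ℝ} (x₀ : M)
    (hmem : α t ∈ (extChartAt 𝓘(ℝ, E) x₀).target)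
    (hα : HasDerivAt α (tangentCoordChange 𝓘(ℝ, E) ((extChartAt 𝓘(ℝ, E) x₀).symm (α t)) x₀
      ((extChartAt 𝓘(ℝ, E) x₀).symm (α t)) (v ((extChartAt 𝓘(ℝ, E) x₀).symm (α t)))) t) :
    HasMFDerivAt 𝓘(ℝ, ℝ) 𝓘(ℝ, E) ((extChartAt 𝓘(ℝ, E) x₀).symm ∘ α) t
      ((1 : ℝ →L[ℝ] ℝ).smulRight (v ((extChartAt 𝓘(ℝ, E) x₀).symm (α t)))) := by
  have h : HasDerivAt α (fderivWithin ℝ (extChartAt 𝓘(ℝ, E) x₀ ∘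
      (extChartAt 𝓘(ℝ, E) ((extChartAt 𝓘(ℝ, E) x₀).symm (α t))).symm)
      (range 𝓘(ℝ, E))
      (extChartAt 𝓘(ℝ, E) ((extChartAt 𝓘(ℝ, E) x₀).symm (α t))
        ((extChartAt 𝓘(ℝ, E) x₀).symm (α t)))
      (v ((extChartAt 𝓘(ℝ, E) x₀).symm (α t)))) t := by
    rw [← tangentCoordChange_def]; exact hα
  have hf3' : α t ∈ (extChartAt 𝓘(ℝ, E) x₀).target := hmem
  have hf3 : α t ∈ interior (extChartAt 𝓘(ℝ, E) x₀).target := by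
    rwa [(isOpen_extChartAt_target (I := 𝓘(ℝ, E)) x₀).interior_eq]
  have hft1 := mem_preimage.mp <|
    mem_of_mem_of_subset hf3' (extChartAt 𝓘(ℝ, E) x₀).target_subset_preimage_source
  have hft2 := mem_extChartAt_source (I := 𝓘(ℝ, E)) ((extChartAt 𝓘(ℝ, E) x₀).symm (α t))
  refine ⟨(continuousAt_extChartAt_symm'' hf3').comp h.continuousAt,
    HasDerivWithinAt.hasFDerivWithinAt (𝕜 := ℝ) (F := E) ?_⟩
  simp only [mfld_simps, chartAt_self_eq, hasDerivWithinAt_univ]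
  apply HasDerivAt.hasDerivWithinAt
  show HasDerivAt ((extChartAt 𝓘(ℝ, E) ((extChartAt 𝓘(ℝ, E) x₀).symm (α t)) ∘
      (extChartAt 𝓘(ℝ, E) x₀).symm) ∘ α) (v ((extChartAt 𝓘(ℝ, E) x₀).symm (α t))) t
  rw [← tangentCoordChange_self (I := 𝓘(ℝ, E)) (x := (extChartAt 𝓘(ℝ, E) x₀).symm (α t))
      (z := (extChartAt 𝓘(ℝ, E) x₀).symm (α t))
      (v := v ((extChartAt 𝓘(ℝ, E) x₀).symm (α t))) hft2]
  erw [← tangentCoordChange_comp (x := x₀) ⟨⟨hft2, hft1⟩, hft2⟩]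
  apply HasFDerivAt.comp_hasDerivAt _ _ h
  apply HasFDerivWithinAt.hasFDerivAt (s := range 𝓘(ℝ, E)) _ <|
    mem_nhds_iff.mpr ⟨interior (extChartAt 𝓘(ℝ, E) x₀).target,
      subset_trans interior_subset (extChartAt_target_subset_range ..),
      isOpen_interior, hf3⟩
  have h2 := hasFDerivWithinAt_tangentCoordChange (I := 𝓘(ℝ, E)) ⟨hft1, hft2⟩
  rw [(extChartAt 𝓘(ℝ, E) x₀).right_inv hf3'] at h2
  exact h2

/-- Joint smoothness of the chart field. -/
lemma chartField_contDiffOn {η : E → (x : M) → TangentSpace 𝓘(ℝ, E) x}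
    (hsm : ContMDiff ((𝓘(ℝ, E)).prod 𝓘(ℝ, E)) (𝓘(ℝ, E)).tangent (⊤ : ℕ∞)
      (fun p : E × M => (⟨p.2, η p.1 p.2⟩ : TangentBundle 𝓘(ℝ, E) M)))
    (x₀ : M) :
    ContDiffOn ℝ ((⊤ : ℕ∞) : WithTop ℕ∞) (fun p : E × E => chartField η x₀ p.1 p.2)
      (univ ×ˢ (extChartAt 𝓘(ℝ, E) x₀).target) := by
  have h := (contMDiffOn_iff.mp (hsm.contMDiffOn (s := univ))).2 ((0 : E), x₀)
    (⟨x₀, η 0 x₀⟩ : TangentBundle 𝓘(ℝ, E) M)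
  have hsub : (univ ×ˢ (extChartAt 𝓘(ℝ, E) x₀).target : Set (E × E)) ⊆
      ((extChartAt ((𝓘(ℝ, E)).prod 𝓘(ℝ, E)) ((0 : E), x₀)).target ∩
        (extChartAt ((𝓘(ℝ, E)).prod 𝓘(ℝ, E)) ((0 : E), x₀)).symm ⁻¹'
          (univ ∩ (fun p : E × M => (⟨p.2, η p.1 p.2⟩ : TangentBundle 𝓘(ℝ, E) M)) ⁻¹'
            (extChartAt (𝓘(ℝ, E)).tangent
              (⟨x₀, η 0 x₀⟩ : TangentBundle 𝓘(ℝ, E) M)).source)) := by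
    rintro ⟨v, y⟩ ⟨-, hy⟩
    constructor
    · simp only [extChartAt_prod, extChartAt_model_space_eq_id, PartialEquiv.prod_target,
        PartialEquiv.refl_target, mem_prod]
      exact ⟨mem_univ _, hy⟩
    · simp only [mem_preimage, extChartAt_prod, extChartAt_model_space_eq_id,
        PartialEquiv.prod_symm, PartialEquiv.refl_symm, PartialEquiv.prod_coe,
        PartialEquiv.refl_coe, univ_inter, id_eq]
      have : ((extChartAt 𝓘(ℝ, E) x₀).symm y) ∈ (extChartAt 𝓘(ℝ, E) x₀).source :=
        (extChartAt 𝓘(ℝ, E) x₀).map_target hy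
      rw [extChartAt_source, TangentBundle.mem_chart_source_iff]
      simpa [extChartAt_source] using this
  exact (h.mono hsub).snd


set_option maxHeartbeats 1000000 in
/-- Key analytic lemma: every point has a neighbourhood each of whose points can be
reached from it by an integral curve of one of the fields `η v`, in time 1. -/
lemma reach_nhds [CompleteSpace E] [Nontrivial E] {η : E → (x : M) → TangentSpace 𝓘(ℝ, E) x}
    (hη : IsOneStructure η) (x₀ : M) :
    ∃ U ∈ 𝓝 x₀, ∀ y ∈ U, ∃ (v : E) (γ : ℝ → M),
      IsIntegralCurveOnOld γ (η v) (Icc (0:ℝ) 1) ∧ γ 0 = x₀ ∧ γ 1 = y := by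
  classical
  set e := extChartAt 𝓘(ℝ, E) x₀ with he
  set c₀ := e x₀ with hc₀
  set f := chartField η x₀ with hf
  -- linearity in `v`
  have hflin : ∀ y : E, IsLinearMap ℝ (fun v => f v y) := by
    intro y
    constructor
    · intro a b
      have h := (hη.linear ((extChartAt 𝓘(ℝ, E) x₀).symm y)).map_add a b
      simp only [hf, chartField]
      rw [h]; exact map_add _ _ _
    · intro a b
      have h := (hη.linear ((extChartAt 𝓘(ℝ, E) x₀).symm y)).map_smul a b
      simp only [hf, chartField]
      rw [h]; exact map_smul _ _ _
  have hfsub : ∀ (v w : E) (y : E), f (v - w) y = f v y - f w y := by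
    intro v w y
    simpa using (IsLinearMap.mk' _ (hflin y)).map_sub v w
  have hfzero : ∀ y : E, f 0 y = 0 := by
    intro y
    simpa using (IsLinearMap.mk' _ (hflin y)).map_zero
  have hfsmul : ∀ (a : ℝ) (v y : E), f (a • v) y = a • f v y := (fun a v y => (hflin y).2 a v)
  -- joint Lipschitz bound near (0, c₀)
  obtain ⟨K₀, s', hs', hlip⟩ :=
    ((chartField_contDiffOn hη.smooth x₀).contDiffAt
      (((isOpen_univ.prod (isOpen_extChartAt_target x₀))).mem_nhds
        (Set.mk_mem_prod (mem_univ _) (mem_extChartAt_target x₀)))).of_le (by exact_mod_cast le_top)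
      |>.exists_lipschitzOnWith
  set K : ℝ := max (K₀ : ℝ) 1 with hK
  have hK1 : (1:ℝ) ≤ K := le_max_right _ _
  have hKpos : (0:ℝ) < K := lt_of_lt_of_le one_pos hK1
  obtain ⟨r₀, hr₀pos, hr₀sub⟩ : ∃ r₀ > 0, Metric.closedBall ((0 : E), c₀) r₀ ⊆
      s' ∩ (univ ×ˢ (extChartAt 𝓘(ℝ, E) x₀).target) := by
    have : s' ∩ (univ ×ˢ (extChartAt 𝓘(ℝ, E) x₀).target) ∈ 𝓝 ((0 : E), c₀) :=
      Filter.inter_mem hs' (((isOpen_univ.prod (isOpen_extChartAt_target x₀))).mem_nhds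
        (Set.mk_mem_prod (mem_univ _) (mem_extChartAt_target x₀)))
    rcases Metric.nhds_basis_closedBall.mem_iff.mp this with ⟨r₀, hr₀, hsub⟩
    exact ⟨r₀, hr₀, hsub⟩
  have hball : ∀ {u : E} {y : E}, ‖u‖ ≤ r₀ → y ∈ Metric.closedBall c₀ r₀ →
      (u, y) ∈ Metric.closedBall ((0 : E), c₀) r₀ := by
    intro u y hu hy
    rw [← closedBall_prod_same]
    exact ⟨by simpa [Metric.mem_closedBall, dist_eq_norm] using hu, hy⟩
  have hballE : Metric.closedBall c₀ r₀ ⊆ (extChartAt 𝓘(ℝ, E) x₀).target := by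
    intro y hy
    have := hr₀sub (hball (u := 0) (by simpa using hr₀pos.le) hy)
    exact this.2.2
  -- scaled Lipschitz estimates
  have hLip : ∀ (v : E), ∀ y ∈ Metric.closedBall c₀ r₀, ∀ y' ∈ Metric.closedBall c₀ r₀,
      ‖f v y - f v y'‖ ≤ K / r₀ * ‖v‖ * ‖y - y'‖ := by
    intro v y hy y' hy'
    rcases eq_or_ne v 0 with rfl | hv
    · simp [hfzero]
    · set u : E := (r₀ / ‖v‖) • v with hu
      have hvn : (0:ℝ) < ‖v‖ := norm_pos_iff.mpr hv
      have hun : ‖u‖ = r₀ := by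
        rw [hu, norm_smul, Real.norm_eq_abs, abs_div, abs_of_nonneg hr₀pos.le,
          abs_of_nonneg hvn.le, div_mul_cancel₀ _ hvn.ne']
      have hvu : f v y - f v y' = (‖v‖ / r₀) • (f u y - f u y') := by
        have h1 : f u y = (r₀ / ‖v‖) • f v y := hfsmul _ _ _
        have h2 : f u y' = (r₀ / ‖v‖) • f v y' := hfsmul _ _ _
        rw [h1, h2, ← smul_sub, smul_smul, div_mul_div_comm,
          mul_comm (‖v‖), div_self (by positivity), one_smul]
      have hd := hlip.dist_le_mul (u, y)
        (hr₀sub (hball (le_of_eq hun) hy)).1 (u, y')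
        (hr₀sub (hball (le_of_eq hun) hy')).1
      have hdy : dist ((u, y) : E × E) (u, y') = ‖y - y'‖ := by
        rw [Prod.dist_eq]
        simp [dist_eq_norm]
      rw [dist_eq_norm] at hd
      rw [hdy] at hd
      have hKK : ‖f u y - f u y'‖ ≤ K * ‖y - y'‖ := by
        refine hd.trans ?_
        have : (K₀ : ℝ) ≤ K := le_max_left _ _
        nlinarith [norm_nonneg (y - y')]
      rw [hvu, norm_smul, Real.norm_eq_abs, abs_of_nonneg (by positivity)]
      calc ‖v‖ / r₀ * ‖f u y - f u y'‖ ≤ ‖v‖ / r₀ * (K * ‖y - y'‖) := by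
            apply mul_le_mul_of_nonneg_left hKK (by positivity)
        _ = K / r₀ * ‖v‖ * ‖y - y'‖ := by ring
  have hBnd : ∀ (v : E), ∀ y ∈ Metric.closedBall c₀ r₀, ‖f v y‖ ≤ K * ‖v‖ := by
    intro v y hy
    rcases eq_or_ne v 0 with rfl | hv
    · simp [hfzero]
    · set u : E := (r₀ / ‖v‖) • v with hu
      have hvn : (0:ℝ) < ‖v‖ := norm_pos_iff.mpr hv
      have hun : ‖u‖ = r₀ := by
        rw [hu, norm_smul, Real.norm_eq_abs, abs_div, abs_of_nonneg hr₀pos.le,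
          abs_of_nonneg hvn.le, div_mul_cancel₀ _ hvn.ne']
      have hfu : f v y = (‖v‖ / r₀) • f u y := by
        have h1 : f u y = (r₀ / ‖v‖) • f v y := hfsmul _ _ _
        rw [h1, smul_smul, div_mul_div_comm, mul_comm (‖v‖), div_self (by positivity), one_smul]
      have hd := hlip.dist_le_mul (u, y)
        (hr₀sub (hball (le_of_eq hun) hy)).1 ((0 : E), y)
        (hr₀sub (hball (u := 0) (by simpa using hr₀pos.le) hy)).1
      have hdy : dist ((u, y) : E × E) ((0 : E), y) = r₀ := by
        rw [Prod.dist_eq]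
        simp [dist_eq_norm, hun, hr₀pos.le]
      have hd2 : ‖f u y - f 0 y‖ ≤ ↑K₀ * dist ((u, y) : E × E) ((0 : E), y) := by
        rw [← dist_eq_norm]; exact hd
      rw [hdy, hfzero, sub_zero] at hd2
      have hKK : ‖f u y‖ ≤ K * r₀ := by
        refine hd2.trans ?_
        have : (K₀ : ℝ) ≤ K := le_max_left _ _
        nlinarith
      rw [hfu, norm_smul, Real.norm_eq_abs, abs_of_nonneg (by positivity)]
      calc ‖v‖ / r₀ * ‖f u y‖ ≤ ‖v‖ / r₀ * (K * r₀) := by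
            apply mul_le_mul_of_nonneg_left hKK (by positivity)
        _ = K * ‖v‖ := by field_simp
  -- the linear isomorphism at x₀, viewed as `E ≃L[ℝ] E`
  obtain ⟨L0, hL⟩ := hη.isom x₀
  let L' : E ≃L[ℝ] E := L0
  have hfc₀ : ∀ v : E, f v c₀ = η v x₀ := by
    intro v
    have key : ∀ z : M, z = x₀ → z ∈ (extChartAt 𝓘(ℝ, E) x₀).source →
        tangentCoordChange 𝓘(ℝ, E) z x₀ z (η v z) = η v x₀ := by
      rintro z rfl hz
      exact tangentCoordChange_self hz
    exact key _ (extChartAt_to_inv x₀) (by rw [extChartAt_to_inv x₀]; exact mem_extChartAt_source x₀)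
  set Nv : ℝ≥0 := L'.toNonlinearRightInverse.nnnorm with hNvdef
  have hNpos : 0 < Nv := by
    rcases exists_ne (0 : E) with ⟨x, hx⟩
    rw [pos_iff_ne_zero]
    intro h0
    have hb := L'.toNonlinearRightInverse.bound' (L' x)
    rw [hNvdef] at h0
    rw [h0] at hb
    simp only [NNReal.coe_zero, zero_mul, norm_le_zero_iff] at hb
    have hax : L'.toNonlinearRightInverse.toFun (L' x) = x :=
      L'.symm_apply_apply x
    exact hx (by rw [← hax, hb])
  set cc : ℝ≥0 := Nv⁻¹ / 2 with hcc
  have hclt : cc < Nv⁻¹ := NNReal.half_lt_self (inv_ne_zero hNpos.ne')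
  have hccpos : (0:ℝ) < cc := by
    have : cc ≠ 0 := by
      rw [hcc]
      exact div_ne_zero (inv_ne_zero hNpos.ne') two_ne_zero
    exact_mod_cast pos_iff_ne_zero.mpr this
  -- choose the small radius s
  have hcont : Continuous fun σ : ℝ => 5 * K * (Real.exp (K / r₀ * σ) - 1) := by continuity
  have htend : Filter.Tendsto (fun σ : ℝ => 5 * K * (Real.exp (K / r₀ * σ) - 1)) (𝓝 0) (𝓝 0) := by
    have := hcont.tendsto 0
    simpa using this
  have hev1 : ∀ᶠ σ in 𝓝[>] (0:ℝ), 5 * K * (Real.exp (K / r₀ * σ) - 1) < cc :=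
    Filter.Eventually.filter_mono nhdsWithin_le_nhds (htend.eventually (gt_mem_nhds hccpos))
  have hev2 : ∀ᶠ σ in 𝓝[>] (0:ℝ), σ < r₀ / (4 * K) :=
    Filter.eventually_of_mem (Ioo_mem_nhdsGT_of_mem ⟨le_refl (0:ℝ), by positivity⟩)
      (fun σ hσ => hσ.2)
  have hev3 : ∀ᶠ σ in 𝓝[>] (0:ℝ), (0:ℝ) < σ :=
    Filter.eventually_of_mem self_mem_nhdsWithin (fun σ hσ => hσ)
  obtain ⟨s, hsK, hsr, hs0⟩ := (hev1.and (hev2.and hev3)).exists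
  have hs4K : 4 * K * s ≤ r₀ := by
    rw [lt_div_iff₀ (by positivity)] at hsr
    nlinarith
  -- solutions of the chart ODE for every small v
  have hex : ∀ v : E, v ∈ Metric.closedBall (0:E) s → ∃ a : ℝ → E, a 0 = c₀ ∧
      (∀ t, a t ∈ Metric.closedBall c₀ (4 * K * ‖v‖)) ∧
      ∀ t ∈ Icc (-1:ℝ) 2, HasDerivWithinAt a (f v (a t)) (Icc (-1:ℝ) 2) t := by
    intro v hv
    have hvs : ‖v‖ ≤ s := mem_closedBall_zero_iff.mp hv
    have hRr : 4 * K * ‖v‖ ≤ r₀ := by nlinarith [norm_nonneg v]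
    have hpl : IsPicardLindelof (fun _ y => f v y) (⟨0, by norm_num⟩ : Icc (-1:ℝ) 2) c₀
        (Real.toNNReal (4 * K * ‖v‖)) 0 (Real.toNNReal (K * ‖v‖))
        (Real.toNNReal (K / r₀ * ‖v‖)) :=
      { lipschitzOnWith := by
          intro t ht
          rw [lipschitzOnWith_iff_dist_le_mul]
          intro x hx y' hy'
          rw [Real.coe_toNNReal _ (by positivity)] at hx hy'
          have hx' : x ∈ Metric.closedBall c₀ r₀ := Metric.closedBall_subset_closedBall hRr hx
          have hy'' : y' ∈ Metric.closedBall c₀ r₀ := Metric.closedBall_subset_closedBall hRr hy'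
          rw [dist_eq_norm, dist_eq_norm, Real.coe_toNNReal _ (by positivity)]
          exact hLip v x hx' y' hy''
        continuousOn := fun x _ => continuousOn_const
        norm_le := fun t _ x hx => by
          rw [Real.coe_toNNReal _ (by positivity)] at hx ⊢
          exact hBnd v x (Metric.closedBall_subset_closedBall hRr hx)
        mul_max_le := by
          rw [Real.coe_toNNReal _ (by positivity), Real.coe_toNNReal _ (by positivity)]
          rw [show max ((2:ℝ) - 0) (0 - (-1)) = 2 by norm_num]
          push_cast
          nlinarith [norm_nonneg v] }
    obtain ⟨a, ha0, hamem, had⟩ := my_pl_exists_solution c₀ hpl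
    refine ⟨a, ha0, fun t => ?_, had⟩
    have := hamem t
    rwa [Real.coe_toNNReal _ (by positivity)] at this
  choose! α hα0 hαmem hαd using hex
  have hαd' : ∀ v ∈ Metric.closedBall (0:E) s, ∀ t ∈ Icc (0:ℝ) 1,
      HasDerivAt (α v) (f v (α v t)) t := by
    intro v hv t ht
    exact (hαd v hv t ⟨by linarith [ht.1], by linarith [ht.2]⟩).hasDerivAt
      (Icc_mem_nhds (by linarith [ht.1]) (by linarith [ht.2]))
  have hαcont : ∀ v ∈ Metric.closedBall (0:E) s, ContinuousOn (α v) (Icc (0:ℝ) 1) := by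
    intro v hv
    have : ContinuousOn (α v) (Icc (-1:ℝ) 2) := fun t ht => (hαd v hv t ht).continuousWithinAt
    exact this.mono (Icc_subset_Icc (by norm_num) (by norm_num))
  have hαball : ∀ v ∈ Metric.closedBall (0:E) s, ∀ t, α v t ∈ Metric.closedBall c₀ r₀ := by
    intro v hv t
    have hvs : ‖v‖ ≤ s := mem_closedBall_zero_iff.mp hv
    refine Metric.closedBall_subset_closedBall ?_ (hαmem v hv t)
    nlinarith [norm_nonneg v]
  -- the approximation property
  have happrox : ApproximatesLinearOn (fun v => α v 1) (L' : E →L[ℝ] E)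
      (Metric.closedBall (0:E) s) cc := by
    intro v hv w hw
    have hvs : ‖v‖ ≤ s := mem_closedBall_zero_iff.mp hv
    have hws : ‖w‖ ≤ s := mem_closedBall_zero_iff.mp hw
    have hLvw : (L' : E →L[ℝ] E) (v - w) = f (v - w) c₀ := by
      rw [hfc₀ (v - w)]
      exact hL (v - w)
    set εc : ℝ → E := fun t => α v t - α w t - t • (f (v - w) c₀) with hεc
    have hKg : (0:ℝ) < K / r₀ * s := by positivity
    have hc₀m : c₀ ∈ Metric.closedBall c₀ r₀ := Metric.mem_closedBall_self hr₀pos.le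
    have hgron : ∀ t ∈ Icc (0:ℝ) 1, ‖εc t‖ ≤
        gronwallBound 0 (K / r₀ * s) (5 * (K ^ 2 / r₀) * s * ‖v - w‖) (t - 0) := by
      apply norm_le_gronwallBound_of_norm_deriv_right_le
        (f' := fun t => f v (α v t) - f w (α w t) - f (v - w) c₀)
      · exact ((hαcont v hv).sub (hαcont w hw)).sub
          ((continuous_id.smul continuous_const).continuousOn)
      · intro t ht
        have h1 := hαd' v hv t ⟨ht.1, ht.2.le⟩
        have h2 := hαd' w hw t ⟨ht.1, ht.2.le⟩
        have h3 : HasDerivAt (fun τ : ℝ => τ • (f (v - w) c₀)) (f (v - w) c₀) t := by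
          simpa using (hasDerivAt_id t).smul_const (f (v - w) c₀)
        exact ((h1.sub h2).sub h3).hasDerivWithinAt
      · simp [hεc, hα0 v hv, hα0 w hw]
      · intro t ht
        have hαvm : α v t ∈ Metric.closedBall c₀ r₀ := hαball v hv t
        have hαwm : α w t ∈ Metric.closedBall c₀ r₀ := hαball w hw t
        have hsplit : f v (α v t) - f w (α w t) - f (v - w) c₀ =
            (f (v - w) (α v t) - f (v - w) c₀) + (f w (α v t) - f w (α w t)) := by
          rw [hfsub v w (α v t)]; abel
        have hαvc : ‖α v t - c₀‖ ≤ 4 * K * s := by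
          have h5 := hαmem v hv t
          rw [Metric.mem_closedBall, dist_eq_norm] at h5
          nlinarith [norm_nonneg v]
        have hA : ‖f (v - w) (α v t) - f (v - w) c₀‖ ≤ K / r₀ * ‖v - w‖ * (4 * K * s) := by
          refine (hLip (v - w) (α v t) hαvm c₀ hc₀m).trans ?_
          exact mul_le_mul_of_nonneg_left hαvc (by positivity)
        have hδ : ‖α v t - α w t‖ ≤ ‖εc t‖ + K * ‖v - w‖ := by
          have h1 : α v t - α w t = εc t + t • f (v - w) c₀ := by
            simp only [hεc]; abel
          rw [h1]
          refine (norm_add_le _ _).trans ?_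
          have h2 : ‖t • f (v - w) c₀‖ ≤ K * ‖v - w‖ := by
            rw [norm_smul, Real.norm_eq_abs, abs_of_nonneg ht.1]
            have h4 := hBnd (v - w) c₀ hc₀m
            nlinarith [norm_nonneg (f (v - w) c₀), ht.2.le, ht.1]
          linarith
        have hB : ‖f w (α v t) - f w (α w t)‖ ≤
            K / r₀ * s * (‖εc t‖ + K * ‖v - w‖) := by
          refine (hLip w (α v t) hαvm (α w t) hαwm).trans ?_
          have h6 : K / r₀ * ‖w‖ ≤ K / r₀ * s := by
            apply mul_le_mul_of_nonneg_left hws (by positivity)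
          have h7 : (0:ℝ) ≤ ‖α v t - α w t‖ := norm_nonneg _
          have h8 : (0:ℝ) ≤ ‖εc t‖ + K * ‖v - w‖ :=
            add_nonneg (norm_nonneg _) (by positivity)
          nlinarith [norm_nonneg w, hδ]
        calc ‖f v (α v t) - f w (α w t) - f (v - w) c₀‖
            = ‖(f (v - w) (α v t) - f (v - w) c₀) + (f w (α v t) - f w (α w t))‖ := by
              rw [hsplit]
          _ ≤ ‖f (v - w) (α v t) - f (v - w) c₀‖ + ‖f w (α v t) - f w (α w t)‖ :=
              norm_add_le _ _
          _ ≤ K / r₀ * ‖v - w‖ * (4 * K * s) + K / r₀ * s * (‖εc t‖ + K * ‖v - w‖) := by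
              linarith
          _ = K / r₀ * s * ‖εc t‖ + 5 * (K ^ 2 / r₀) * s * ‖v - w‖ := by
              field_simp
              ring
    have h1 := hgron 1 ⟨zero_le_one, le_refl 1⟩
    have hgb : gronwallBound 0 (K / r₀ * s) (5 * (K ^ 2 / r₀) * s * ‖v - w‖) (1 - 0) =
        5 * K * (Real.exp (K / r₀ * s) - 1) * ‖v - w‖ := by
      rw [gronwallBound_of_K_ne_0 hKg.ne']
      rw [show ((1:ℝ) - 0) = 1 by norm_num]
      field_simp
      ring
    rw [hgb] at h1
    have hεc1 : (fun v => α v 1) v - (fun v => α v 1) w -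
        (L' : E →L[ℝ] E) (v - w) = εc 1 := by
      simp only [hεc, hLvw, one_smul]
    rw [hεc1]
    refine h1.trans ?_
    exact mul_le_mul_of_nonneg_right hsK.le (norm_nonneg _)
  -- surjectivity of the endpoint map near c₀
  have hF0 : α 0 1 = c₀ := by
    have h5 := hαmem 0 (Metric.mem_closedBall_self hs0.le) 1
    rw [norm_zero, mul_zero, Metric.mem_closedBall, dist_le_zero] at h5
    exact h5
  have hsurj := happrox.surjOn_closedBall_of_nonlinearRightInverse
    L'.toNonlinearRightInverse hs0.le (subset_refl _)
  set ρ : ℝ := (((Nv : ℝ≥0) : ℝ)⁻¹ - cc) * s with hρdef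
  have hρpos : 0 < ρ := by
    have h1 : (cc : ℝ) < ((Nv : ℝ≥0) : ℝ)⁻¹ := by
      have := NNReal.coe_lt_coe.mpr hclt
      rwa [NNReal.coe_inv] at this
    have h2 : (0:ℝ) ≤ (cc : ℝ) := cc.coe_nonneg
    rw [hρdef]
    nlinarith
  refine ⟨(extChartAt 𝓘(ℝ, E) x₀).source ∩
      (extChartAt 𝓘(ℝ, E) x₀) ⁻¹' (Metric.closedBall c₀ ρ), ?_, ?_⟩
  · refine Filter.inter_mem (extChartAt_source_mem_nhds x₀) ?_
    exact (continuousAt_extChartAt x₀).preimage_mem_nhds (Metric.closedBall_mem_nhds _ hρpos)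
  · rintro y ⟨hysrc, hyball⟩
    have hmemb : (extChartAt 𝓘(ℝ, E) x₀ y) ∈ Metric.closedBall (α 0 1) ρ := by
      rw [hF0]; exact hyball
    obtain ⟨v, hv, hFv⟩ := hsurj hmemb
    refine ⟨v, (extChartAt 𝓘(ℝ, E) x₀).symm ∘ α v, ?_, ?_, ?_⟩
    · intro t ht
      have hmem : α v t ∈ (extChartAt 𝓘(ℝ, E) x₀).target := hballE (hαball v hv t)
      exact chart_sol_hasMFDerivAt x₀ hmem (hαd' v hv t ht)
    · show (extChartAt 𝓘(ℝ, E) x₀).symm (α v 0) = x₀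
      rw [hα0 v hv, hc₀, he]
      exact extChartAt_to_inv x₀
    · show (extChartAt 𝓘(ℝ, E) x₀).symm (α v 1) = y
      have : α v 1 = extChartAt 𝓘(ℝ, E) x₀ y := hFv
      rw [this]
      exact (extChartAt 𝓘(ℝ, E) x₀).left_inv hysrc



end OneStruct

theorem flow_invariant_set_eq_univ
    {E : Type*} [NormedAddCommGroup E] [NormedSpace ℝ E] [CompleteSpace E]
    {M : Type*} [TopologicalSpace M] [ChartedSpace E M]
    [IsManifold 𝓘(ℝ, E) (⊤ : ℕ∞) M] [ConnectedSpace M]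
    (η : E → (x : M) → TangentSpace 𝓘(ℝ, E) x) (hη : IsOneStructure η)
    (A : Set M) (hA : A.Nonempty)
    (hinv : ∀ (v : E) (γ : ℝ → M) (J : Set ℝ), J.OrdConnected →
      IsIntegralCurveOnOld γ (η v) J →
        ∀ s ∈ J, ∀ t ∈ J, γ s ∈ A → γ t ∈ A) :
    A = Set.univ := by
  rcases subsingleton_or_nontrivial E with hE | hE
  · obtain ⟨a, ha⟩ := hA
    have hsingl : ∀ x : M, IsOpen ({x} : Set M) := by
      intro x
      have hsub : (chartAt E x).source ⊆ {x} := by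
        intro z hz
        have h1 : chartAt E x z = chartAt E x x := Subsingleton.elim _ _
        have h2 := (chartAt E x).injOn hz (mem_chart_source E x) h1
        simp [h2]
      have hxx : ({x} : Set M) = (chartAt E x).source :=
        Subset.antisymm (by simpa using mem_chart_source E x) hsub
      rw [hxx]
      exact (chartAt E x).open_source
    have hall : ∀ s : Set M, IsOpen s := by
      intro s
      rw [← Set.biUnion_of_singleton s]
      exact isOpen_biUnion (fun x _ => hsingl x)
    have hclosed : IsClosed A := by
      rw [← compl_compl A]
      exact (hall Aᶜ).isClosed_compl
    exact IsClopen.eq_univ ⟨hclosed, hall A⟩ ⟨a, ha⟩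
  · have hAopen : IsOpen A := by
      rw [isOpen_iff_mem_nhds]
      intro x hx
      obtain ⟨U, hU, h⟩ := reach_nhds hη x
      refine Filter.mem_of_superset hU ?_
      intro y hy
      obtain ⟨v, γ, hγ, h0, h1⟩ := h y hy
      have := hinv v γ (Icc 0 1) ordConnected_Icc hγ 0 ⟨le_refl 0, zero_le_one⟩ 1
        ⟨zero_le_one, le_refl 1⟩ (by rw [h0]; exact hx)
      rwa [h1] at this
    have hAcopen : IsOpen Aᶜ := by
      rw [isOpen_iff_mem_nhds]
      intro x hx
      obtain ⟨U, hU, h⟩ := reach_nhds hη x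
      refine Filter.mem_of_superset hU ?_
      intro y hy
      obtain ⟨v, γ, hγ, h0, h1⟩ := h y hy
      intro hyA
      have := hinv v γ (Icc 0 1) ordConnected_Icc hγ 1 ⟨zero_le_one, le_refl 1⟩ 0
        ⟨le_refl 0, zero_le_one⟩ (by rw [h1]; exact hyA)
      rw [h0] at this
      exact hx this
    have hclosed : IsClosed A := by
      rw [← compl_compl A]
      exact hAcopen.isClosed_compl
    exact IsClopen.eq_univ ⟨hclosed, hAopen⟩ hA
end
end

section
/- Let M and N be C¹ Banach manifolds without boundary, let U be an open neighborhood of a point x in M, and let f : U → N be a C¹ map such that the tangent map T_xf : T_xM → T_{f(x)}N is a closed topological embedding (an injective continuous linear map with closed image that is a homeomorphism onto its image). Then there exists an open neighborhood U′ ⊆ U of x such that the restriction f|_{U′} is a topological embedding. -/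
/-!
Statement 8: If a `C¹` map between Banach manifolds has a derivative at a point that
is a closed topological embedding, then the map is a topological embedding on some
open neighborhood of that point.
-/

open scoped Manifold

open scoped NNReal
open Set Topology

-- Step 1: a closed embedding CLM between Banach spaces is antilipschitz
theorem aux_antilip {E F : Type*} [NormedAddCommGroup E] [NormedSpace ℝ E] [CompleteSpace E]
    [NormedAddCommGroup F] [NormedSpace ℝ F] [CompleteSpace F] (A : E →L[ℝ] F)
    (h : Topology.IsClosedEmbedding A) : ∃ K : ℝ≥0, AntilipschitzWith K A := by
  have hcl : IsClosed ((LinearMap.range (A : E →ₗ[ℝ] F) : Submodule ℝ F) : Set F) := by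
    rw [LinearMap.coe_range]; exact h.isClosed_range
  have : CompleteSpace (LinearMap.range (A : E →ₗ[ℝ] F)) := hcl.completeSpace_coe
  set B : E →L[ℝ] LinearMap.range (A : E →ₗ[ℝ] F) :=
    A.codRestrict _ (fun x => LinearMap.mem_range_self _ x) with hB
  have hker : B.ker = ⊥ := by
    rw [hB, ContinuousLinearMap.ker_codRestrict]
    exact LinearMap.ker_eq_bot.2 h.injective
  have hrange : B.range = ⊤ := by
    ext ⟨y, hy⟩
    simpa [hB, Subtype.ext_iff] using hy
  let e := ContinuousLinearEquiv.ofBijective B hker hrange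
  refine ⟨‖(e.symm : LinearMap.range (A : E →ₗ[ℝ] F) →L[ℝ] E)‖₊, fun p q => le_trans (e.antilipschitz p q) ?_⟩
  have heq : edist (e p) (e q) = edist (A p) (A q) := rfl
  rw [heq]

theorem locally_embedding_of_mfderiv_isClosedEmbedding
    {E : Type*} [NormedAddCommGroup E] [NormedSpace ℝ E] [CompleteSpace E]
    {F : Type*} [NormedAddCommGroup F] [NormedSpace ℝ F] [CompleteSpace F]
    {M : Type*} [TopologicalSpace M] [ChartedSpace E M]
    [HasGroupoid M (contDiffGroupoid 1 𝓘(ℝ, E))]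
    {N : Type*} [TopologicalSpace N] [ChartedSpace F N]
    [HasGroupoid N (contDiffGroupoid 1 𝓘(ℝ, F))]
    (f : M → N) (U : Set M) (hU : IsOpen U) (x : M) (hx : x ∈ U)
    (hf : ContMDiffOn 𝓘(ℝ, E) 𝓘(ℝ, F) 1 f U)
    (hder : Topology.IsClosedEmbedding (mfderiv 𝓘(ℝ, E) 𝓘(ℝ, F) f x)) :
    ∃ U' ⊆ U, IsOpen U' ∧ x ∈ U' ∧ Topology.IsEmbedding (U'.restrict f) := by
  set c := chartAt E x with hc
  set d := chartAt F (f x) with hd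
  set g : E → F := d ∘ f ∘ c.symm with hgdef
  set A : E →L[ℝ] F := mfderiv 𝓘(ℝ, E) 𝓘(ℝ, F) f x with hA
  have hmd : ContMDiffAt 𝓘(ℝ, E) 𝓘(ℝ, F) 1 f x := hf.contMDiffAt (hU.mem_nhds hx)
  -- g is C¹ at c x
  have hgc : ContDiffAt ℝ 1 g (c x) := by
    have := (contMDiffAt_iff.1 hmd).2
    simp only [extChartAt, OpenPartialHomeomorph.extend, modelWithCornersSelf_partialEquiv,
      PartialEquiv.trans_refl, OpenPartialHomeomorph.toFun_eq_coe, OpenPartialHomeomorph.coe_coe_symm,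
      modelWithCornersSelf_coe, Set.range_id, contDiffWithinAt_univ] at this
    exact this
  -- A is the fderiv of g at c x
  have hfd : fderiv ℝ g (c x) = A := by
    rw [hA, (hmd.mdifferentiableAt one_ne_zero).mfderiv]
    simp only [writtenInExtChartAt, extChartAt, OpenPartialHomeomorph.extend,
      modelWithCornersSelf_partialEquiv, PartialEquiv.trans_refl,
      OpenPartialHomeomorph.toFun_eq_coe, modelWithCornersSelf_coe,
      Set.range_id, fderivWithin_univ]
    rfl
  have hstrict : HasStrictFDerivAt g A (c x) := hfd ▸ hgc.hasStrictFDerivAt one_ne_zero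
  -- antilipschitz constant for A
  obtain ⟨K₀, hK₀⟩ := aux_antilip A hder
  set K : ℝ≥0 := K₀ + 1 with hK
  have hKA : AntilipschitzWith K A := fun p q =>
    le_trans (hK₀ p q) (by gcongr; · exact le_self_add)
  have hKpos : (0 : ℝ≥0) < K := by positivity
  set ε : ℝ≥0 := (2 * K)⁻¹ with hε
  have hεpos : (0 : ℝ≥0) < ε := by positivity
  have hεlt : ε < K⁻¹ := by
    have h2 : (2 : ℝ≥0)⁻¹ * K⁻¹ < 1 * K⁻¹ :=
      mul_lt_mul_of_pos_right (by exact_mod_cast (by norm_num : (2:ℝ)⁻¹ < 1)) (inv_pos.2 hKpos)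
    rw [hε, mul_inv]
    simpa using h2
  obtain ⟨s, hs_nhds, happrox⟩ := hstrict.approximates_deriv_on_nhds (Or.inr hεpos)
  -- g is antilipschitz on s
  have hanti : AntilipschitzWith (K⁻¹ - ε)⁻¹ (s.restrict g) := by
    have h1 : AntilipschitzWith K (s.restrict (A : E → F)) := hKA.restrict s
    have h2 : LipschitzWith ε (s.restrict g - s.restrict (A : E → F)) := happrox.lipschitz_sub
    exact h1.add_sub_lipschitzWith h2 hεlt
  have hlip : LipschitzWith (‖A‖₊ + ε) (s.restrict g) := happrox.lipschitz
  have hembg : Topology.IsEmbedding (s.restrict g) :=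
    (hanti.isUniformEmbedding hlip.uniformContinuous).isEmbedding
  -- the neighborhood
  set U' : Set M := (U ∩ f ⁻¹' d.source) ∩ (c.source ∩ c ⁻¹' interior s) with hU'
  have hU'open : IsOpen U' :=
    (hf.continuousOn.isOpen_inter_preimage hU d.open_source).inter
      (c.isOpen_inter_preimage isOpen_interior)
  have hxU' : x ∈ U' :=
    ⟨⟨hx, mem_chart_source F (f x)⟩, mem_chart_source E x,
      mem_interior_iff_mem_nhds.2 hs_nhds⟩
  have hU'sub : U' ⊆ U := fun u hu => hu.1.1
  have hU'c : U' ⊆ c.source := fun u hu => hu.2.1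
  have hcu_mem : ∀ u : U', c u ∈ s := fun u => interior_subset u.2.2.2
  have hgcu : ∀ u : U', g (c u) = d (f u) := fun u => by
    simp only [hgdef, Function.comp_apply, c.left_inv (hU'c u.2)]
  have hgcu_mem : ∀ u : U', g (c u) ∈ d.target := fun u => by
    rw [hgcu u]; exact d.map_source u.2.1.2
  -- assemble the embedding
  have e1 : Topology.IsEmbedding (fun u : U' => (c u : E)) :=
    c.isOpenEmbedding_restrict.isEmbedding.comp (Topology.IsEmbedding.inclusion hU'c)
  have e2 : Topology.IsEmbedding (Set.codRestrict (fun u : U' => (c u : E)) s hcu_mem) :=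
    e1.codRestrict s hcu_mem
  have e3 : Topology.IsEmbedding (fun u : U' => g (c u)) :=
    hembg.comp e2
  have e4 : Topology.IsEmbedding
      (Set.codRestrict (fun u : U' => g (c u)) d.target hgcu_mem) :=
    e3.codRestrict d.target hgcu_mem
  have e5 : Topology.IsEmbedding (d.target.restrict d.symm) := by
    have := d.symm.isOpenEmbedding_restrict.isEmbedding
    simp at this; exact this
  refine ⟨U', hU'sub, hU'open, hxU', ?_⟩
  have : U'.restrict f =
      (d.target.restrict d.symm) ∘ (Set.codRestrict (fun u : U' => g (c u)) d.target hgcu_mem) := by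
    funext u
    simp only [Set.restrict_apply, Function.comp_apply, Set.codRestrict, hgcu u]
    exact (d.left_inv u.2.1.2).symm
  rw [this]
  exact e5.comp e4
end
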